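/- arXiv:1509.07445 — 9 statements merged into one kernel-verified Lean document; each statement's English description precedes it below -/
import Mathlib

section
/- Let X be a finite set of keys, let f, g : X → ℝ≥0 satisfy sum(f) > 0 and sum(g) > 0, and suppose there are constants 0 < a ≤ b with a·g_x ≤ f_x ≤ b·g_x for every x ∈ X; set ρ = b/a. Fix k > 0 and let S be a random sample that includes each key x independently with probability p_x = min{1, k·f_x/sum(f)}. Then for every segment H ⊆ X with sum(g;H) > 0, the inverse-probability estimator Ŝ(g;H) = Σ_{x∈S∩H} g_x/p_x satisfies E[Ŝ(g;H)] = sum(g;H) and Var[Ŝ(g;H)] ≤ ρ·sum(g;H)·sum(g)/k; equivalently its coefficient of variation is at most sqrt(ρ/(q^{(g)}(H)·k)). -/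
open Finset

/-- Probability that a Poisson sample with independent inclusion probabilities `p`
equals exactly the subset `S`. -/
noncomputable def sampleProb {X : Type*} [Fintype X] [DecidableEq X]
    (p : X → ℝ) (S : Finset X) : ℝ :=
  (∏ x ∈ S, p x) * ∏ x ∈ Sᶜ, (1 - p x)

/-- Expectation of a functional of the sample. -/
noncomputable def pexpect {X : Type*} [Fintype X] [DecidableEq X]
    (p : X → ℝ) (φ : Finset X → ℝ) : ℝ :=
  ∑ S : Finset X, sampleProb p S * φ S

/-- Variance of a functional of the sample. -/
noncomputable def pvar {X : Type*} [Fintype X] [DecidableEq X]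
    (p : X → ℝ) (φ : Finset X → ℝ) : ℝ :=
  pexpect p (fun S => (φ S - pexpect p φ) ^ 2)

section aux
variable {X : Type*} [Fintype X] [DecidableEq X]

lemma sum_prod_mul_prod_compl (u v : X → ℝ) :
    ∑ S : Finset X, (∏ x ∈ S, u x) * ∏ x ∈ Sᶜ, v x = ∏ x, (u x + v x) := by
  rw [Finset.prod_add, ← Finset.powerset_univ]
  apply Finset.sum_congr rfl
  intro S _
  rw [Finset.compl_eq_univ_sdiff]

lemma sum_sampleProb (p : X → ℝ) : ∑ S : Finset X, sampleProb p S = 1 := by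
  unfold sampleProb
  rw [sum_prod_mul_prod_compl]
  simp

lemma pexpect_ind (p : X → ℝ) (T : Finset X) :
    pexpect p (fun S => if T ⊆ S then (1:ℝ) else 0) = ∏ x ∈ T, p x := by
  unfold pexpect sampleProb
  have key : ∀ S : Finset X,
      ((∏ x ∈ S, p x) * ∏ x ∈ Sᶜ, (1 - p x)) * (if T ⊆ S then (1:ℝ) else 0)
        = (∏ x ∈ S, p x) * ∏ x ∈ Sᶜ, (if x ∈ T then 0 else 1 - p x) := by
    intro S
    by_cases h : T ⊆ S
    · rw [if_pos h, mul_one]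
      congr 1
      apply Finset.prod_congr rfl
      intro x hx
      rw [Finset.mem_compl] at hx
      rw [if_neg (fun hxT => hx (h hxT))]
    · rw [if_neg h, mul_zero]
      obtain ⟨t, htT, htS⟩ := Finset.not_subset.mp h
      have hz : (∏ x ∈ Sᶜ, if x ∈ T then (0:ℝ) else 1 - p x) = 0 :=
        Finset.prod_eq_zero (Finset.mem_compl.mpr htS) (if_pos htT)
      rw [hz, mul_zero]
  simp_rw [key]
  rw [sum_prod_mul_prod_compl, ← Finset.prod_mul_prod_compl T]
  have h1 : ∀ x ∈ T, p x + (if x ∈ T then (0:ℝ) else 1 - p x) = p x := by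
    intro x hx; rw [if_pos hx, add_zero]
  have h2 : ∀ x ∈ Tᶜ, p x + (if x ∈ T then (0:ℝ) else 1 - p x) = 1 := by
    intro x hx; rw [Finset.mem_compl] at hx; rw [if_neg hx]; ring
  rw [Finset.prod_congr rfl h1, Finset.prod_congr rfl h2, Finset.prod_const_one, mul_one]

lemma pexpect_sum {ι : Type*} (p : X → ℝ) (I : Finset ι) (ψ : ι → Finset X → ℝ) :
    pexpect p (fun S => ∑ i ∈ I, ψ i S) = ∑ i ∈ I, pexpect p (ψ i) := by
  unfold pexpect
  simp_rw [Finset.mul_sum]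
  exact Finset.sum_comm

lemma pexpect_const_mul (p : X → ℝ) (c : ℝ) (φ : Finset X → ℝ) :
    pexpect p (fun S => c * φ S) = c * pexpect p φ := by
  unfold pexpect
  rw [Finset.mul_sum]
  exact Finset.sum_congr rfl fun S _ => by ring

lemma pexpect_single (p : X → ℝ) (x : X) (c : ℝ) :
    pexpect p (fun S => if x ∈ S then c else 0) = c * p x := by
  have h : (fun S : Finset X => if x ∈ S then c else 0)
      = fun S => c * (if ({x} : Finset X) ⊆ S then (1:ℝ) else 0) := by
    funext S
    by_cases hx : x ∈ S <;> simp [hx]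
  rw [h, pexpect_const_mul, pexpect_ind, Finset.prod_singleton]

lemma pexpect_pair (p : X → ℝ) (x y : X) (cx cy : ℝ) :
    pexpect p (fun S => (if x ∈ S then cx else 0) * (if y ∈ S then cy else 0))
      = cx * cy * ∏ z ∈ ({x, y} : Finset X), p z := by
  have h : (fun S : Finset X => (if x ∈ S then cx else 0) * (if y ∈ S then cy else 0))
      = fun S => (cx * cy) * (if ({x, y} : Finset X) ⊆ S then (1:ℝ) else 0) := by
    funext S
    by_cases hx : x ∈ S <;> by_cases hy : y ∈ S <;>
      simp [hx, hy, Finset.insert_subset_iff]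
  rw [h, pexpect_const_mul, pexpect_ind]

lemma pvar_eq (p : X → ℝ) (φ : Finset X → ℝ) :
    pvar p φ = pexpect p (fun S => φ S ^ 2) - (pexpect p φ) ^ 2 := by
  have h1 := sum_sampleProb p
  unfold pvar pexpect
  set μ := ∑ S : Finset X, sampleProb p S * φ S with hμ
  have expand : ∀ S : Finset X, sampleProb p S * (φ S - μ) ^ 2
      = sampleProb p S * φ S ^ 2 - 2 * μ * (sampleProb p S * φ S) + μ ^ 2 * sampleProb p S := by
    intro S; ring
  simp_rw [expand]
  rw [Finset.sum_add_distrib, Finset.sum_sub_distrib, ← Finset.mul_sum, ← Finset.mul_sum,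
    ← hμ, h1]
  ring

end aux

/-- Estimation quality of Poisson pps sampling for `f`, used to
estimate `sum(g; H)`: the inverse-probability estimator is unbiased and its variance
is at most `ρ · sum(g;H) · sum(g) / k` (equivalently, its CV is at most
`sqrt(ρ / (q^{(g)}(H) · k))`). -/
theorem stmt0 {X : Type*} [Fintype X] [DecidableEq X]
    (f g : X → ℝ) (hf0 : ∀ x, 0 ≤ f x) (hg0 : ∀ x, 0 ≤ g x)
    (hfs : 0 < ∑ x, f x) (hgs : 0 < ∑ x, g x)
    (a b : ℝ) (ha : 0 < a) (hab : a ≤ b)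
    (hlow : ∀ x, a * g x ≤ f x) (hhigh : ∀ x, f x ≤ b * g x)
    (k : ℝ) (hk : 0 < k)
    (p : X → ℝ) (hp : ∀ x, p x = min 1 (k * f x / ∑ y, f y))
    (H : Finset X) (hH : 0 < ∑ x ∈ H, g x)
    (est : Finset X → ℝ) (hest : ∀ S, est S = ∑ x ∈ S ∩ H, g x / p x) :
    pexpect p est = ∑ x ∈ H, g x ∧
    pvar p est ≤ (b / a) * (∑ x ∈ H, g x) * (∑ x, g x) / k := by
  set F := ∑ x, f x with hF
  set G := ∑ x, g x with hG
  have hb : 0 < b := lt_of_lt_of_le ha hab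
  have hpnn : ∀ x, 0 ≤ p x := by
    intro x
    rw [hp]
    exact le_min zero_le_one (div_nonneg (mul_nonneg hk.le (hf0 x)) hfs.le)
  have hple : ∀ x, p x ≤ 1 := fun x => by rw [hp]; exact min_le_left _ _
  have hppos : ∀ x, 0 < g x → 0 < p x := by
    intro x hgx
    rw [hp]
    have hfx : 0 < f x := lt_of_lt_of_le (mul_pos ha hgx) (hlow x)
    exact lt_min one_pos (div_pos (mul_pos hk hfx) hfs)
  have hmul : ∀ x, g x / p x * p x = g x := by
    intro x
    rcases eq_or_lt_of_le (hg0 x) with h | h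
    · simp [← h]
    · field_simp [(hppos x h).ne']
  have hest' : est = fun S => ∑ x ∈ H, (if x ∈ S then g x / p x else 0) := by
    funext S
    rw [hest S, Finset.inter_comm, ← Finset.filter_mem_eq_inter, Finset.sum_filter]
  have hmean : pexpect p est = ∑ x ∈ H, g x := by
    rw [hest', pexpect_sum]
    exact Finset.sum_congr rfl fun x _ => by rw [pexpect_single, hmul x]
  refine ⟨hmean, ?_⟩
  have hsq : pexpect p (fun S => est S ^ 2)
      = ∑ x ∈ H, ∑ y ∈ H, g x / p x * (g y / p y) * ∏ z ∈ ({x, y} : Finset X), p z := by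
    have h : (fun S => est S ^ 2) = fun S => ∑ x ∈ H, ∑ y ∈ H,
        (if x ∈ S then g x / p x else 0) * (if y ∈ S then g y / p y else 0) := by
      funext S
      simp only [hest']
      rw [sq, Finset.sum_mul_sum]
    rw [h, pexpect_sum]
    refine Finset.sum_congr rfl fun x _ => ?_
    rw [pexpect_sum]
    exact Finset.sum_congr rfl fun y _ => pexpect_pair p x y _ _
  have hvar : pvar p est = ∑ x ∈ H, (g x / p x) ^ 2 * (p x * (1 - p x)) := by
    rw [pvar_eq, hsq, hmean, sq (∑ x ∈ H, g x), Finset.sum_mul_sum,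
      ← Finset.sum_sub_distrib]
    refine Finset.sum_congr rfl fun x hx => ?_
    rw [← Finset.sum_sub_distrib]
    rw [Finset.sum_eq_single x]
    · have hxx : ({x, x} : Finset X) = {x} := by simp
      rw [hxx, Finset.prod_singleton]
      rcases eq_or_lt_of_le (hg0 x) with h | h
      · simp [← h]
      · have hpx := (hppos x h).ne'
        field_simp
    · intro y _ hyx
      rw [Finset.prod_pair (Ne.symm hyx)]
      have h1 : g x / p x * (g y / p y) * (p x * p y) = g x * g y := by
        calc g x / p x * (g y / p y) * (p x * p y)
            = (g x / p x * p x) * (g y / p y * p y) := by ring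
          _ = g x * g y := by rw [hmul x, hmul y]
      rw [h1, sub_self]
    · intro hxH; exact absurd hx hxH
  rw [hvar]
  have hbound : ∀ x ∈ H, (g x / p x) ^ 2 * (p x * (1 - p x)) ≤ b / a * (g x * G) / k := by
    intro x _
    rcases eq_or_lt_of_le (hg0 x) with h | hgx
    · simp [← h]
    · have hpx := hppos x hgx
      have hfx : 0 < f x := lt_of_lt_of_le (mul_pos ha hgx) (hlow x)
      rcases lt_or_ge (k * f x / F) 1 with hlt | hge
      · have hpeq : p x = k * f x / F := by rw [hp]; exact min_eq_right hlt.le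
        have hFb : F ≤ b * G := by
          rw [hF, hG, Finset.mul_sum]
          exact Finset.sum_le_sum fun y _ => hhigh y
        have h1 : (g x / p x) ^ 2 * (p x * (1 - p x)) ≤ g x ^ 2 / p x := by
          have heq : (g x / p x) ^ 2 * (p x * (1 - p x)) = g x ^ 2 / p x * (1 - p x) := by
            field_simp
          rw [heq]
          exact mul_le_of_le_one_right (by positivity) (by linarith [hpnn x])
        refine le_trans h1 ?_
        rw [hpeq, div_div_eq_mul_div]
        rw [div_le_div_iff₀ (by positivity) hk]
        have h4 := hlow x
        have h5 : b / a * (g x * G) * (k * (a * g x)) = g x ^ 2 * (b * G) * k := by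
          field_simp
        nlinarith [mul_le_mul_of_nonneg_left h4 (by positivity : (0:ℝ) ≤ b / a * (g x * G) * k),
          mul_le_mul_of_nonneg_left hFb (by positivity : (0:ℝ) ≤ g x ^ 2 * k)]
      · have hpeq : p x = 1 := by rw [hp]; exact min_eq_left hge
        rw [hpeq]
        simp
        positivity
  calc ∑ x ∈ H, (g x / p x) ^ 2 * (p x * (1 - p x))
      ≤ ∑ x ∈ H, b / a * (g x * G) / k := Finset.sum_le_sum hbound
    _ = b / a * (∑ x ∈ H, g x) * G / k := by
        rw [← Finset.sum_div, ← Finset.mul_sum, ← Finset.sum_mul]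
        ring
end

section
/- Let X be a finite set of keys, let f, g : X → ℝ≥0 satisfy sum(f) > 0 and sum(g) > 0, and suppose a·g_x ≤ f_x ≤ b·g_x for all x with 0 < a ≤ b; set ρ = b/a. Fix k > 0, let S include each key x independently with probability p_x = min{1, k·f_x/sum(f)}, and let Ŝ(g;H) = Σ_{x∈S∩H} g_x/p_x. Then for every H ⊆ X with sum(g;H) > 0 and every δ > 1: Pr[Ŝ(g;H) − sum(g;H) > δ·sum(g;H)] ≤ exp(−q^{(g)}(H)·k·ρ^{−2}·δ/3). -/
open Finset

open scoped Classical in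
/-- Probability of an event of the sample. -/
noncomputable def pprob {X : Type*} [Fintype X] [DecidableEq X]
    (p : X → ℝ) (E : Finset X → Prop) : ℝ :=
  ∑ S : Finset X, if E S then sampleProb p S else 0

/-- Key analytic inequality: for `1 ≤ x`, `(4/3)*x ≤ (1+x) * log (1+x)`. -/
lemma aux_log_ineq {x : ℝ} (hx : 1 ≤ x) : (4/3)*x ≤ (1+x)*Real.log (1+x) := by
  set φ : ℝ → ℝ := fun y => (1+y)*Real.log (1+y) - 4/3*y with hφ
  have hd : ∀ y : ℝ, 0 < 1 + y →
      HasDerivAt φ (Real.log (1+y) + 1 - 4/3) y := by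
    intro y hy
    have h1 : HasDerivAt (fun z : ℝ => 1 + z) 1 y := (hasDerivAt_id y).const_add 1
    have h2 : HasDerivAt (fun z : ℝ => Real.log (1+z)) (1/(1+y)) y := h1.log (ne_of_gt hy)
    have h3 := h1.mul h2
    have h4 : HasDerivAt (fun z : ℝ => 4/3*z) (4/3) y := by
      simpa using (hasDerivAt_id y).const_mul (4/3 : ℝ)
    have h5 := h3.sub h4
    exact h5.congr_deriv (by rw [mul_one_div_cancel (ne_of_gt hy)]; ring)
  have hmono : MonotoneOn φ (Set.Ici 1) := by
    apply monotoneOn_of_deriv_nonneg (convex_Ici 1)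
    · intro y hy
      exact ((hd y (by simp at hy; linarith)).continuousAt).continuousWithinAt
    · intro y hy
      rw [interior_Ici] at hy
      exact ((hd y (by simp at hy; linarith)).differentiableAt).differentiableWithinAt
    · intro y hy
      rw [interior_Ici] at hy
      simp only [Set.mem_Ioi] at hy
      rw [(hd y (by linarith)).deriv]
      have : Real.log 2 ≤ Real.log (1+y) :=
        Real.log_le_log (by norm_num) (by linarith)
      have h2 := Real.log_two_gt_d9
      linarith
  have h1 : φ 1 ≤ φ x := hmono (by simp) (by simpa using hx) hx
  have hφ1 : 0 ≤ φ 1 := by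
    have h2 := Real.log_two_gt_d9
    simp only [hφ]
    norm_num
    linarith
  simp only [hφ] at h1 hφ1
  linarith

/-- Convexity chord bound: `exp (t*c) ≤ 1 + (c/M)*(exp (t*M) - 1)`. -/
lemma aux_chord {t c M : ℝ} (hc : 0 ≤ c) (hcM : c ≤ M) (hM : 0 < M) :
    Real.exp (t*c) ≤ 1 + c/M * (Real.exp (t*M) - 1) := by
  have ha : (0:ℝ) ≤ 1 - c/M := by
    have h1 : c/M ≤ 1 := by rw [div_le_one hM]; exact hcM
    linarith
  have h := convexOn_exp.2 (Set.mem_univ (0:ℝ)) (Set.mem_univ (t*M))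
    ha (div_nonneg hc hM.le) (by ring)
  simp only [smul_eq_mul, mul_zero, zero_add, Real.exp_zero] at h
  have he : c/M * (t*M) = t*c := by field_simp
  rw [he] at h
  linarith

lemma aux_expansion {X : Type*} [Fintype X] [DecidableEq X] (p ψ : X → ℝ) :
    ∑ S : Finset X, (∏ x ∈ S, p x * ψ x) * ∏ x ∈ Sᶜ, (1 - p x)
      = ∏ x : X, (p x * ψ x + (1 - p x)) := by
  rw [Finset.prod_add, Finset.powerset_univ]
  apply Finset.sum_congr rfl
  intro S _
  rw [Finset.compl_eq_univ_sdiff]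

lemma aux_mgf {X : Type*} [Fintype X] [DecidableEq X] (p c : X → ℝ) (H : Finset X) (t : ℝ) :
    ∑ S : Finset X, sampleProb p S * Real.exp (t * ∑ x ∈ S ∩ H, c x)
      = ∏ x : X, (p x * (if x ∈ H then Real.exp (t * c x) else 1) + (1 - p x)) := by
  rw [← aux_expansion]
  apply Finset.sum_congr rfl
  intro S _
  rw [sampleProb, Finset.mul_sum, Real.exp_sum, ← Finset.prod_ite_mem S H
    (fun x => Real.exp (t * c x)), Finset.prod_mul_distrib]
  ring

lemma sampleProb_nonneg {X : Type*} [Fintype X] [DecidableEq X] {p : X → ℝ}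
    (hp : ∀ x, 0 ≤ p x ∧ p x ≤ 1) (S : Finset X) : 0 ≤ sampleProb p S :=
  mul_nonneg (Finset.prod_nonneg fun x _ => (hp x).1)
    (Finset.prod_nonneg fun x _ => by linarith [(hp x).2])

lemma aux_markov {X : Type*} [Fintype X] [DecidableEq X] (p : X → ℝ)
    (hp : ∀ x, 0 ≤ p x ∧ p x ≤ 1) (E : Finset X → Prop) (Z : Finset X → ℝ) (r t : ℝ)
    (ht : 0 ≤ t) (hE : ∀ S, E S → r ≤ Z S) :
    pprob p E ≤ Real.exp (-(t*r)) * ∑ S : Finset X, sampleProb p S * Real.exp (t * Z S) := by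
  classical
  rw [pprob, Finset.mul_sum]
  apply Finset.sum_le_sum
  intro S _
  have hw : 0 ≤ sampleProb p S := sampleProb_nonneg hp S
  by_cases h : E S
  · simp only [if_pos h]
    have h1 : Real.exp (-(t*r)) * (sampleProb p S * Real.exp (t * Z S))
        = sampleProb p S * Real.exp (t * Z S - t * r) := by
      rw [show t * Z S - t * r = t * Z S + -(t*r) by ring, Real.exp_add]; ring
    rw [h1]
    have h2 : (1:ℝ) ≤ Real.exp (t * Z S - t * r) := by
      rw [Real.one_le_exp_iff]
      have := hE S h
      nlinarith
    nlinarith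
  · simp only [if_neg h]
    positivity

/-- **Statement 2.** One-sided multiplicative Chernoff bound for the
inverse-probability estimator over a Poisson pps sample, with disparity `ρ = b/a`,
for relative error `δ > 1` (one-sided). -/
theorem stmt3 {X : Type*} [Fintype X] [DecidableEq X]
    (f g : X → ℝ) (hf0 : ∀ x, 0 ≤ f x) (hg0 : ∀ x, 0 ≤ g x)
    (hfs : 0 < ∑ x, f x) (hgs : 0 < ∑ x, g x)
    (a b : ℝ) (ha : 0 < a) (hab : a ≤ b)
    (hlow : ∀ x, a * g x ≤ f x) (hhigh : ∀ x, f x ≤ b * g x)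
    (k : ℝ) (hk : 0 < k)
    (p : X → ℝ) (hp : ∀ x, p x = min 1 (k * f x / ∑ y, f y))
    (H : Finset X) (hH : 0 < ∑ x ∈ H, g x)
    (est : Finset X → ℝ) (hest : ∀ S, est S = ∑ x ∈ S ∩ H, g x / p x)
    (δ : ℝ) (hδ : 1 < δ) :
    pprob p (fun S => est S - ∑ x ∈ H, g x > δ * ∑ x ∈ H, g x) ≤
      Real.exp (-((∑ x ∈ H, g x) / (∑ x, g x) * k * ((b / a) ^ 2)⁻¹ * δ / 3)) := by
  classical
  set F := ∑ x, f x with hF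
  set G := ∑ x, g x with hG
  set μ := ∑ x ∈ H, g x with hμ
  set c : X → ℝ := fun x => g x / p x with hc
  set M : ℝ := F / (k * a) with hM
  have hb : 0 < b := lt_of_lt_of_le ha hab
  have hMpos : 0 < M := div_pos hfs (mul_pos hk ha)
  -- basic facts about p
  have hp01 : ∀ x, 0 ≤ p x ∧ p x ≤ 1 := by
    intro x
    rw [hp x]
    constructor
    · exact le_min (by norm_num) (div_nonneg (mul_nonneg hk.le (hf0 x)) hfs.le)
    · exact min_le_left _ _
  have hg_le : ∀ x, g x ≤ f x / a := fun x => (le_div_iff₀ ha).2 (by linarith [hlow x, mul_comm a (g x)])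
  have hgf0 : ∀ x, f x = 0 → g x = 0 := by
    intro x hfx
    have h1 := hg_le x
    have h2 := hg0 x
    rw [hfx] at h1
    simp at h1
    linarith
  have hpc : ∀ x, p x * c x = g x := by
    intro x
    by_cases hpx : p x = 0
    · have hfx : f x = 0 := by
        by_contra hne
        have hf' : 0 < f x := lt_of_le_of_ne (hf0 x) (Ne.symm hne)
        have : 0 < min 1 (k * f x / F) :=
          lt_min (by norm_num) (div_pos (mul_pos hk hf') hfs)
        rw [← hp x] at this
        exact absurd hpx (ne_of_gt this)
      have hcx : c x = g x / p x := rfl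
      rw [hpx, hcx, hgf0 x hfx]
      simp
    · have hcx : c x = g x / p x := rfl
      rw [hcx]
      field_simp
  have hcnn : ∀ x, 0 ≤ c x := fun x => div_nonneg (hg0 x) (hp01 x).1
  have hcM : ∀ x, p x < 1 → c x ≤ M := by
    intro x hpx
    have hpeq : p x = k * f x / F := by
      rw [hp x] at hpx ⊢
      rcases min_cases 1 (k * f x / F) with ⟨h1, h2⟩ | ⟨h1, h2⟩
      · rw [h1] at hpx; exact absurd hpx (lt_irrefl 1)
      · exact h1
    by_cases hfx : f x = 0
    · have : c x = 0 := by rw [hc]; simp [hgf0 x hfx]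
      rw [this]; exact hMpos.le
    · have hf' : 0 < f x := lt_of_le_of_ne (hf0 x) (Ne.symm hfx)
      have hppos : 0 < p x := by rw [hpeq]; exact div_pos (mul_pos hk hf') hfs
      have hcx : c x = g x / p x := rfl
      rw [hcx, div_le_iff₀ hppos, hpeq, hM]
      have heq : F / (k * a) * (k * f x / F) = f x / a := by
        field_simp
      rw [heq]
      exact hg_le x
  -- split of H
  set H₂ := H.filter (fun x => p x < 1) with hH₂
  set μ' := ∑ x ∈ H₂, g x with hμ'
  set D := ∑ x ∈ H.filter (fun x => ¬ p x < 1), g x with hD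
  have hsplit : μ' + D = μ := by
    rw [hμ', hD, hμ, hH₂]
    exact Finset.sum_filter_add_sum_filter_not H _ g
  have hμ'nn : 0 ≤ μ' := Finset.sum_nonneg fun x _ => hg0 x
  have hDnn : 0 ≤ D := Finset.sum_nonneg fun x _ => hg0 x
  have hμ'le : μ' ≤ μ := by linarith
  -- the key MGF bound
  have key : ∀ t : ℝ, 0 ≤ t →
      pprob p (fun S => est S - μ > δ * μ) ≤
        Real.exp (-(t*((1+δ)*μ)) + t*D + μ' * (Real.exp (t*M) - 1) / M) := by
    intro t ht
    have hmarkov := aux_markov p hp01 (fun S => est S - μ > δ * μ) est ((1+δ)*μ) t ht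
      (by intro S hS; linarith [hS])
    have hmgf : ∑ S : Finset X, sampleProb p S * Real.exp (t * est S)
        = ∏ x : X, (p x * (if x ∈ H then Real.exp (t * c x) else 1) + (1 - p x)) := by
      rw [← aux_mgf p c H t]
      apply Finset.sum_congr rfl
      intro S _
      rw [hest S]
    -- bound the product
    have hfac_nonneg : ∀ x : X,
        0 ≤ p x * (if x ∈ H then Real.exp (t * c x) else 1) + (1 - p x) := by
      intro x
      have h1 := (hp01 x).1
      have h2 := (hp01 x).2
      have h3 : (0:ℝ) ≤ (if x ∈ H then Real.exp (t * c x) else 1) := by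
        split <;> positivity
      nlinarith
    have hprod_split : ∏ x : X, (p x * (if x ∈ H then Real.exp (t * c x) else 1) + (1 - p x))
        = ∏ x ∈ H, (p x * Real.exp (t * c x) + (1 - p x)) := by
      rw [← Finset.prod_filter_mul_prod_filter_not Finset.univ (fun x => x ∈ H)]
      have h1 : ∏ x ∈ Finset.univ.filter (fun x => x ∉ H),
          (p x * (if x ∈ H then Real.exp (t * c x) else 1) + (1 - p x)) = 1 := by
        apply Finset.prod_eq_one
        intro x hx
        simp only [Finset.mem_filter] at hx
        rw [if_neg hx.2]
        ring
      rw [h1, mul_one]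
      apply Finset.prod_congr
      · ext x; simp
      · intro x hx
        rw [if_pos hx]
    have hHsplit : ∏ x ∈ H, (p x * Real.exp (t * c x) + (1 - p x))
        = (∏ x ∈ H₂, (p x * Real.exp (t * c x) + (1 - p x))) *
          ∏ x ∈ H.filter (fun x => ¬ p x < 1), Real.exp (t * g x) := by
      rw [hH₂, ← Finset.prod_filter_mul_prod_filter_not H (fun x => p x < 1)]
      congr 1
      apply Finset.prod_congr rfl
      intro x hx
      simp only [Finset.mem_filter] at hx
      have hpx1 : p x = 1 := le_antisymm (hp01 x).2 (by push_neg at hx; exact hx.2)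
      have hcx : c x = g x := by
        show g x / p x = g x
        rw [hpx1, div_one]
      rw [hcx, hpx1]
      ring
    have hbound2 : ∏ x ∈ H₂, (p x * Real.exp (t * c x) + (1 - p x))
        ≤ Real.exp (μ' * (Real.exp (t*M) - 1) / M) := by
      have hterm : ∀ x ∈ H₂, p x * Real.exp (t * c x) + (1 - p x)
          ≤ Real.exp (g x * (Real.exp (t*M) - 1) / M) := by
        intro x hx
        simp only [hH₂, Finset.mem_filter] at hx
        have hch := aux_chord (t := t) (hcnn x) (hcM x hx.2) hMpos
        have h1 := (hp01 x).1
        have hpcx := hpc x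
        have h2 : p x * Real.exp (t * c x) + (1 - p x)
            ≤ 1 + g x * (Real.exp (t*M) - 1) / M := by
          have h3 : p x * Real.exp (t * c x) ≤ p x * (1 + c x / M * (Real.exp (t*M) - 1)) :=
            mul_le_mul_of_nonneg_left hch h1
          have h4 : p x * (c x / M * (Real.exp (t*M) - 1)) = g x * (Real.exp (t*M) - 1) / M := by
            rw [← hpcx]; ring
          nlinarith
        calc p x * Real.exp (t * c x) + (1 - p x)
            ≤ 1 + g x * (Real.exp (t*M) - 1) / M := h2
          _ ≤ Real.exp (g x * (Real.exp (t*M) - 1) / M) := by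
              have := Real.add_one_le_exp (g x * (Real.exp (t*M) - 1) / M)
              linarith
      calc ∏ x ∈ H₂, (p x * Real.exp (t * c x) + (1 - p x))
          ≤ ∏ x ∈ H₂, Real.exp (g x * (Real.exp (t*M) - 1) / M) := by
            apply Finset.prod_le_prod
            · intro x hx
              have h1 := (hp01 x).1
              have h2 := (hp01 x).2
              have h3 : (0:ℝ) ≤ Real.exp (t * c x) := (Real.exp_pos _).le
              nlinarith
            · exact hterm
        _ = Real.exp (μ' * (Real.exp (t*M) - 1) / M) := by
            rw [← Real.exp_sum, hμ', Finset.sum_mul, Finset.sum_div]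
    have hDprod : ∏ x ∈ H.filter (fun x => ¬ p x < 1), Real.exp (t * g x)
        = Real.exp (t * D) := by
      rw [← Real.exp_sum, hD, Finset.mul_sum]
    calc pprob p (fun S => est S - μ > δ * μ)
        ≤ Real.exp (-(t*((1+δ)*μ))) * ∑ S : Finset X, sampleProb p S * Real.exp (t * est S) :=
          hmarkov
      _ = Real.exp (-(t*((1+δ)*μ))) *
          ((∏ x ∈ H₂, (p x * Real.exp (t * c x) + (1 - p x))) * Real.exp (t * D)) := by
          rw [hmgf, hprod_split, hHsplit, hDprod]
      _ ≤ Real.exp (-(t*((1+δ)*μ))) *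
          (Real.exp (μ' * (Real.exp (t*M) - 1) / M) * Real.exp (t * D)) := by
          apply mul_le_mul_of_nonneg_left _ (Real.exp_pos _).le
          apply mul_le_mul_of_nonneg_right hbound2 (Real.exp_pos _).le
      _ = Real.exp (-(t*((1+δ)*μ)) + t*D + μ' * (Real.exp (t*M) - 1) / M) := by
          rw [← Real.exp_add, ← Real.exp_add]
          ring_nf
  -- final arithmetic
  clear_value c H₂
  clear_value F G μ M μ' D
  have hδ0 : (0:ℝ) < δ := by linarith
  have hFbG : F ≤ b * G := by
    rw [hF, hG, Finset.mul_sum]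
    exact Finset.sum_le_sum fun x _ => hhigh x
  have hinv : ((b/a)^2)⁻¹ = a^2/b^2 := by
    rw [div_pow, inv_div]
  set E₀ : ℝ := μ / G * k * ((b/a)^2)⁻¹ * δ / 3 with hE₀
  have hE₀pos : 0 < E₀ := by
    rw [hE₀, hinv]
    have h1 : 0 < a^2/b^2 := div_pos (pow_pos ha 2) (pow_pos hb 2)
    have h2 : 0 < μ / G := div_pos hH hgs
    positivity
  have hcomp : E₀ ≤ δ * μ / (3 * M) := by
    rw [hE₀, hinv, hM]
    have hlhs : μ / G * k * (a^2/b^2) * δ / 3 = μ*k*a^2*δ / (3*G*b^2) := by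
      field_simp
    have hrhs : δ * μ / (3 * (F/(k*a))) = δ*μ*k*a / (3*F) := by
      field_simp
    rw [hlhs, hrhs, div_le_div_iff₀ (by positivity) (by positivity)]
    have h1 : a * F ≤ b^2 * G := by
      have h1a : a * F ≤ a * (b * G) := mul_le_mul_of_nonneg_left hFbG ha.le
      have h1b : a * (b * G) ≤ b * (b * G) :=
        mul_le_mul_of_nonneg_right hab (mul_nonneg hb.le hgs.le)
      calc a * F ≤ a * (b*G) := h1a
        _ ≤ b * (b*G) := h1b
        _ = b^2 * G := by ring
    have h2 : 0 ≤ μ*k*a*δ*3 := by positivity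
    calc μ*k*a^2*δ * (3*F) = (μ*k*a*δ*3) * (a*F) := by ring
      _ ≤ (μ*k*a*δ*3) * (b^2*G) := mul_le_mul_of_nonneg_left h1 h2
      _ = δ*μ*k*a * (3*G*b^2) := by ring
  rcases eq_or_lt_of_le hμ'nn with hμ'0 | hμ'pos
  · -- deterministic case: μ' = 0
    have hDμ : D = μ := by linarith
    set t₀ : ℝ := E₀ / (δ * μ) with ht₀def
    have ht₀ : 0 ≤ t₀ := div_nonneg hE₀pos.le (by positivity)
    refine le_trans (key t₀ ht₀) (Real.exp_le_exp.2 ?_)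
    have he1 : -(t₀*((1+δ)*μ)) + t₀*D + μ' * (Real.exp (t₀*M) - 1) / M = -(t₀*(δ*μ)) := by
      rw [hDμ, ← hμ'0]
      ring
    rw [he1]
    have he2 : t₀ * (δ*μ) = E₀ := by
      rw [ht₀def]
      field_simp
    rw [he2]
  · -- random case: μ' > 0
    set l : ℝ := δ * μ / μ' with hl
    have hl1 : 1 < l := by
      have h1 : δ * μ / μ ≤ δ * μ / μ' :=
        div_le_div_of_nonneg_left (by positivity) hμ'pos hμ'le
      have h2 : δ * μ / μ = δ := by field_simp
      rw [h2] at h1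
      linarith
    have hμ'l : μ' * l = δ * μ := by
      rw [hl]
      field_simp
    clear_value l
    set t₁ : ℝ := Real.log (1+l) / M with ht₁def
    have ht₁ : 0 ≤ t₁ := div_nonneg (Real.log_nonneg (by linarith)) hMpos.le
    have hexp : Real.exp (t₁ * M) = 1 + l := by
      rw [ht₁def, div_mul_cancel₀ _ (ne_of_gt hMpos), Real.exp_log (by linarith)]
    refine le_trans (key t₁ ht₁) (Real.exp_le_exp.2 ?_)
    rw [hexp]
    have hDeq : D = μ - μ' := by linarith
    have heq : -(t₁*((1+δ)*μ)) + t₁*(μ - μ') + μ' * ((1 + l) - 1) / M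
        = μ' * (l - (1+l)*Real.log (1+l)) / M := by
      rw [ht₁def]
      linear_combination (Real.log (1+l) / M) * hμ'l
    rw [hDeq, heq]
    have hlog := aux_log_ineq (le_of_lt hl1)
    have h5 : μ' * (l - (1+l)*Real.log (1+l)) ≤ -(δ*μ)/3 := by
      have h5a : l - (1+l)*Real.log (1+l) ≤ -(l/3) := by linarith
      have h5b : μ' * (l - (1+l)*Real.log (1+l)) ≤ μ' * (-(l/3)) :=
        mul_le_mul_of_nonneg_left h5a hμ'nn
      have h5c : μ' * (-(l/3)) = -(δ*μ)/3 := by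
        rw [show μ' * (-(l/3)) = -(μ' * l)/3 by ring, hμ'l]
      exact le_of_le_of_eq h5b h5c
    have h6 : μ' * (l - (1+l)*Real.log (1+l)) / M ≤ (-(δ*μ)/3) / M :=
      (div_le_div_iff_of_pos_right hMpos).2 h5
    have h7 : (-(δ*μ)/3) / M = -(δ*μ/(3*M)) := by
      rw [neg_div, neg_div, div_div]
    rw [h7] at h6
    exact le_trans h6 (neg_le_neg hcomp)
end

section
/- Let X be a finite set of keys, let G be a finite set of functions g : X → ℝ≥0 each with sum(g) > 0, let α : G → ℝ≥0, and let f = Σ_{g∈G} α_g·g satisfy sum(f) > 0. Then for every k > 0 and every key x ∈ X: min{1, k·f_x/sum(f)} ≤ max_{g∈G} min{1, k·g_x/sum(g)}. In particular, f_x/sum(f) ≤ max_{g∈G} g_x/sum(g), so the multi-objective pps probabilities for G ∪ {f} with uniform size parameter k coincide with those for G, and any nonnegative linear combination of functions of G lies in the sampling closure of G. -/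
open Finset

/-- Sampling closure under nonnegative linear combinations: for
`f = Σ_{g∈G} α_g·g`, the pps probability of `f` is dominated pointwise by the
multi-objective pps probability of `G`; in particular the base pps probabilities
satisfy `f_x/sum(f) ≤ max_{g∈G} g_x/sum(g)`, and the multi-objective pps
probabilities for `G ∪ {f}` coincide with those for `G`. -/
theorem stmt8 {X : Type*} [Fintype X] [DecidableEq (X → ℝ)]
    (G : Finset (X → ℝ)) (hG : G.Nonempty)
    (hg0 : ∀ g ∈ G, ∀ x, 0 ≤ g x) (hgs : ∀ g ∈ G, 0 < ∑ x, g x)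
    (α : (X → ℝ) → ℝ) (hα : ∀ g ∈ G, 0 ≤ α g)
    (f : X → ℝ) (hf : f = fun x => ∑ g ∈ G, α g * g x)
    (hfs : 0 < ∑ x, f x) :
    ∀ k : ℝ, 0 < k → ∀ x : X,
      min 1 (k * f x / ∑ y, f y) ≤
        G.sup' hG (fun g => min 1 (k * g x / ∑ y, g y)) ∧
      f x / ∑ y, f y ≤ G.sup' hG (fun g => g x / ∑ y, g y) ∧
      (insert f G).sup' (Finset.insert_nonempty f G)
          (fun g => min 1 (k * g x / ∑ y, g y)) =
        G.sup' hG (fun g => min 1 (k * g x / ∑ y, g y)) := by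
  intro k hk x
  set r := G.sup' hG (fun g => g x / ∑ y, g y) with hr
  -- key inequality: f x ≤ (∑ y, f y) * r
  have hsumf : (∑ y, f y) = ∑ g ∈ G, α g * ∑ y, g y := by
    subst hf
    rw [Finset.sum_comm]
    simp [Finset.mul_sum]
  have hkey : f x ≤ (∑ y, f y) * r := by
    have hfx : f x = ∑ g ∈ G, α g * g x := by rw [hf]
    rw [hfx, hsumf, Finset.sum_mul]
    apply Finset.sum_le_sum
    intro g hg
    have hgs' := hgs g hg
    have hratio : g x / ∑ y, g y ≤ r := Finset.le_sup' (fun g => g x / ∑ y, g y) hg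
    have : α g * g x = α g * (∑ y, g y) * (g x / ∑ y, g y) := by
      field_simp
    rw [this]
    exact mul_le_mul_of_nonneg_left hratio
      (mul_nonneg (hα g hg) hgs'.le)
  have h2 : f x / ∑ y, f y ≤ r := by
    rw [div_le_iff₀ hfs]
    linarith [hkey, mul_comm (∑ y, f y) r]
  -- attain the sup
  obtain ⟨g₀, hg₀, hg₀eq⟩ := Finset.exists_mem_eq_sup' hG (fun g => g x / ∑ y, g y)
  have h1 : min 1 (k * f x / ∑ y, f y) ≤
      G.sup' hG (fun g => min 1 (k * g x / ∑ y, g y)) := by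
    refine le_trans ?_ (Finset.le_sup' (fun g => min 1 (k * g x / ∑ y, g y)) hg₀)
    apply min_le_min le_rfl
    rw [mul_div_assoc, mul_div_assoc]
    apply mul_le_mul_of_nonneg_left _ hk.le
    rw [← hg₀eq]; exact h2
  refine ⟨h1, h2, ?_⟩
  apply le_antisymm
  · apply Finset.sup'_le
    intro g hg
    rcases Finset.mem_insert.mp hg with h | h
    · subst h; exact h1
    · exact Finset.le_sup' (fun g => min 1 (k * g x / ∑ y, g y)) h
  · apply Finset.sup'_le
    intro g hg
    exact Finset.le_sup' (fun g => min 1 (k * g x / ∑ y, g y)) (Finset.mem_insert_of_mem hg)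
end

section
/- Let X be a finite set of keys, let F be a finite nonempty set of functions f : X → ℝ≥0 each with sum(f) > 0 and size parameters k_f > 0, and let g : X → ℝ≥0 with sum(g) > 0. Suppose that for each f ∈ F there are constants 0 < a_f ≤ b_f with a_f·g_x ≤ f_x ≤ b_f·g_x for all x; set ρ_f = b_f/a_f. Let S include each key x independently with the multi-objective pps probability p_x = min{1, max_{f∈F} k_f·f_x/sum(f)}. Then for every H ⊆ X with sum(g;H) > 0, the inverse-probability estimator Ŝ(g;H) = Σ_{x∈S∩H} g_x/p_x is unbiased for sum(g;H) and its coefficient of variation is at most min_{f∈F} sqrt(ρ_f/(q^{(g)}(H)·k_f)). -/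
open Finset

lemma gen_lemma {X : Type*} [Fintype X] [DecidableEq X] (p w : X → ℝ) :
    ∑ S : Finset X, sampleProb p S * ∏ x ∈ S, w x
      = ∏ x, (p x * w x + (1 - p x)) := by
  rw [Finset.prod_add, Finset.powerset_univ]
  apply Finset.sum_congr rfl
  intro S _
  rw [sampleProb, Finset.prod_mul_distrib, ← Finset.compl_eq_univ_sdiff]
  ring

lemma total_one {X : Type*} [Fintype X] [DecidableEq X] (p : X → ℝ) :
    ∑ S : Finset X, sampleProb p S = 1 := by
  have h := gen_lemma p (fun _ => 1)
  simpa using h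

lemma moment1 {X : Type*} [Fintype X] [DecidableEq X] (p : X → ℝ) (x : X) :
    ∑ S : Finset X, sampleProb p S * (if x ∈ S then (1:ℝ) else 0) = p x := by
  have h := gen_lemma p (fun z => if z = x then 2 else 1)
  have hr : ∏ z, (p z * (if z = x then (2:ℝ) else 1) + (1 - p z)) = 1 + p x := by
    rw [Finset.prod_congr rfl (fun z _ => show p z * (if z = x then (2:ℝ) else 1) + (1 - p z)
        = if z = x then 1 + p z else 1 by split <;> ring),
      Finset.prod_ite_eq' Finset.univ x (fun z => 1 + p z)]
    simp
  have hl : ∀ S : Finset X, (∏ z ∈ S, (if z = x then (2:ℝ) else 1))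
      = 1 + (if x ∈ S then (1:ℝ) else 0) := by
    intro S
    rw [Finset.prod_ite_eq' S x (fun _ => (2:ℝ))]
    split <;> norm_num
  rw [hr, Finset.sum_congr rfl (fun S _ => by rw [hl S])] at h
  have hsplit : ∑ S : Finset X, sampleProb p S * (1 + (if x ∈ S then (1:ℝ) else 0))
      = (∑ S : Finset X, sampleProb p S)
        + ∑ S : Finset X, sampleProb p S * (if x ∈ S then (1:ℝ) else 0) := by
    rw [← Finset.sum_add_distrib]
    exact Finset.sum_congr rfl fun S _ => by ring
  rw [hsplit, total_one] at h
  linarith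

lemma moment2 {X : Type*} [Fintype X] [DecidableEq X] (p : X → ℝ) {x y : X} (hxy : x ≠ y) :
    ∑ S : Finset X, sampleProb p S *
      ((if x ∈ S then (1:ℝ) else 0) * (if y ∈ S then (1:ℝ) else 0)) = p x * p y := by
  have h := gen_lemma p (fun z => (if z = x then 2 else 1) * (if z = y then 2 else 1))
  have hr : ∏ z, (p z * ((if z = x then (2:ℝ) else 1) * (if z = y then 2 else 1)) + (1 - p z))
      = (1 + p x) * (1 + p y) := by
    have e : ∀ z, p z * ((if z = x then (2:ℝ) else 1) * (if z = y then 2 else 1)) + (1 - p z)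
        = (if z = x then 1 + p z else 1) * (if z = y then 1 + p z else 1) := by
      intro z
      rcases eq_or_ne z x with rfl | hzx
      · simp only [if_pos rfl, if_neg hxy, if_true, eq_self_iff_true]; ring
      · rcases eq_or_ne z y with rfl | hzy
        · simp only [if_pos rfl, if_neg hzx, if_true, eq_self_iff_true]; ring
        · simp [hzx, hzy]
    rw [Finset.prod_congr rfl (fun z _ => e z), Finset.prod_mul_distrib,
      Finset.prod_ite_eq' Finset.univ x (fun z => 1 + p z),
      Finset.prod_ite_eq' Finset.univ y (fun z => 1 + p z)]
    simp
  have hl : ∀ S : Finset X,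
      (∏ z ∈ S, ((if z = x then (2:ℝ) else 1) * (if z = y then 2 else 1)))
      = (1 + (if x ∈ S then (1:ℝ) else 0)) * (1 + (if y ∈ S then (1:ℝ) else 0)) := by
    intro S
    rw [Finset.prod_mul_distrib, Finset.prod_ite_eq' S x (fun _ => (2:ℝ)),
      Finset.prod_ite_eq' S y (fun _ => (2:ℝ))]
    split <;> split <;> norm_num
  rw [hr, Finset.sum_congr rfl (fun S _ => by rw [hl S])] at h
  have hsplit : ∑ S : Finset X, sampleProb p S
        * ((1 + (if x ∈ S then (1:ℝ) else 0)) * (1 + (if y ∈ S then (1:ℝ) else 0)))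
      = (∑ S : Finset X, sampleProb p S)
        + (∑ S : Finset X, sampleProb p S * (if x ∈ S then (1:ℝ) else 0))
        + ((∑ S : Finset X, sampleProb p S * (if y ∈ S then (1:ℝ) else 0))
        + ∑ S : Finset X, sampleProb p S *
            ((if x ∈ S then (1:ℝ) else 0) * (if y ∈ S then (1:ℝ) else 0))) := by
    rw [← Finset.sum_add_distrib, ← Finset.sum_add_distrib, ← Finset.sum_add_distrib]
    exact Finset.sum_congr rfl fun S _ => by ring
  rw [hsplit, total_one, moment1, moment1] at h
  linarith

/-- Estimation quality of multi-objective pps samples: with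
inclusion probabilities `min{1, max_{f∈F} k_f·f_x/sum(f)}`, the inverse-probability
estimator of `sum(g;H)` is unbiased and for every `f ∈ F` its variance is at most
`ρ_f · sum(g;H) · sum(g) / k_f`, i.e., the CV is at most
`min_{f∈F} sqrt(ρ_f/(q^{(g)}(H)·k_f))`. -/
theorem stmt9 {X : Type*} [Fintype X] [DecidableEq X]
    (F : Finset (X → ℝ)) (hF : F.Nonempty)
    (hf0 : ∀ f ∈ F, ∀ x, 0 ≤ f x) (hfs : ∀ f ∈ F, 0 < ∑ x, f x)
    (kf : (X → ℝ) → ℝ) (hk : ∀ f ∈ F, 0 < kf f)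
    (g : X → ℝ) (hg0 : ∀ x, 0 ≤ g x) (hgs : 0 < ∑ x, g x)
    (a b : (X → ℝ) → ℝ) (ha : ∀ f ∈ F, 0 < a f) (hab : ∀ f ∈ F, a f ≤ b f)
    (hlow : ∀ f ∈ F, ∀ x, a f * g x ≤ f x) (hhigh : ∀ f ∈ F, ∀ x, f x ≤ b f * g x)
    (p : X → ℝ)
    (hp : ∀ x, p x = min 1 (F.sup' hF fun f => kf f * f x / ∑ y, f y))
    (H : Finset X) (hH : 0 < ∑ x ∈ H, g x)
    (est : Finset X → ℝ) (hest : ∀ S, est S = ∑ x ∈ S ∩ H, g x / p x) :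
    pexpect p est = ∑ x ∈ H, g x ∧
    ∀ f ∈ F, pvar p est ≤ (b f / a f) * (∑ x ∈ H, g x) * (∑ x, g x) / kf f := by
  obtain ⟨f₀, hf₀⟩ := id hF
  have hp1 : ∀ x, p x ≤ 1 := fun x => by rw [hp x]; exact min_le_left _ _
  have hp0 : ∀ x, 0 ≤ p x := by
    intro x
    rw [hp x]
    refine le_min zero_le_one ?_
    refine le_trans ?_ (Finset.le_sup' (fun f => kf f * f x / ∑ y, f y) hf₀)
    exact div_nonneg (mul_nonneg (hk _ hf₀).le (hf0 _ hf₀ x)) (hfs _ hf₀).le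
  have hgp : ∀ x, 0 < g x → 0 < p x := by
    intro x hgx
    rw [hp x]
    refine lt_min one_pos ?_
    refine lt_of_lt_of_le ?_ (Finset.le_sup' (fun f => kf f * f x / ∑ y, f y) hf₀)
    exact div_pos (mul_pos (hk _ hf₀)
      (lt_of_lt_of_le (mul_pos (ha _ hf₀) hgx) (hlow _ hf₀ x))) (hfs _ hf₀)
  have hcp : ∀ x, g x / p x * p x = g x := by
    intro x
    rcases eq_or_lt_of_le (hg0 x) with h | h
    · simp [← h]
    · exact div_mul_cancel₀ _ (ne_of_gt (hgp x h))
  have hestH : ∀ S : Finset X, est S = ∑ x ∈ H, (g x / p x) * (if x ∈ S then (1:ℝ) else 0) := by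
    intro S
    rw [hest S, Finset.inter_comm, ← Finset.sum_ite_mem]
    exact Finset.sum_congr rfl fun x _ => by split <;> ring
  have hmean' : ∑ S : Finset X, sampleProb p S * est S = ∑ x ∈ H, g x := by
    calc ∑ S : Finset X, sampleProb p S * est S
        = ∑ S : Finset X, ∑ x ∈ H,
            (g x / p x) * (sampleProb p S * (if x ∈ S then (1:ℝ) else 0)) := by
          refine Finset.sum_congr rfl fun S _ => ?_
          rw [hestH S, Finset.mul_sum]
          exact Finset.sum_congr rfl fun x _ => by ring
      _ = ∑ x ∈ H, ∑ S : Finset X,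
            (g x / p x) * (sampleProb p S * (if x ∈ S then (1:ℝ) else 0)) := Finset.sum_comm
      _ = ∑ x ∈ H, g x / p x * p x := by
          refine Finset.sum_congr rfl fun x _ => ?_
          rw [← Finset.mul_sum, moment1]
      _ = ∑ x ∈ H, g x := Finset.sum_congr rfl fun x _ => hcp x
  have hmean : pexpect p est = ∑ x ∈ H, g x := by
    simp only [pexpect]; exact hmean'
  refine ⟨hmean, ?_⟩
  have hsq' : ∑ S : Finset X, sampleProb p S * est S ^ 2
      = ∑ x ∈ H, ∑ y ∈ H, (g x / p x) * (g y / p y) * (if x = y then p x else p x * p y) := by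
    have e1 : ∀ S : Finset X, sampleProb p S * est S ^ 2
        = ∑ x ∈ H, ∑ y ∈ H, sampleProb p S *
            ((g x / p x) * (if x ∈ S then (1:ℝ) else 0)
              * ((g y / p y) * (if y ∈ S then (1:ℝ) else 0))) := by
      intro S
      rw [hestH S, sq, Finset.sum_mul_sum, Finset.mul_sum]
      exact Finset.sum_congr rfl fun x _ => by rw [Finset.mul_sum]
    rw [Finset.sum_congr rfl fun S _ => e1 S, Finset.sum_comm]
    refine Finset.sum_congr rfl fun x hx => ?_
    rw [Finset.sum_comm]
    refine Finset.sum_congr rfl fun y hy => ?_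
    rcases eq_or_ne x y with rfl | hxy
    · rw [if_pos rfl]
      calc ∑ S : Finset X, sampleProb p S *
            ((g x / p x) * (if x ∈ S then (1:ℝ) else 0)
              * ((g x / p x) * (if x ∈ S then (1:ℝ) else 0)))
          = ∑ S : Finset X, (g x / p x) * (g x / p x)
              * (sampleProb p S * (if x ∈ S then (1:ℝ) else 0)) :=
            Finset.sum_congr rfl fun S _ => by by_cases h : x ∈ S <;> simp [h] <;> ring
        _ = (g x / p x) * (g x / p x) * p x := by rw [← Finset.mul_sum, moment1]
    · rw [if_neg hxy]
      calc ∑ S : Finset X, sampleProb p S *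
            ((g x / p x) * (if x ∈ S then (1:ℝ) else 0)
              * ((g y / p y) * (if y ∈ S then (1:ℝ) else 0)))
          = ∑ S : Finset X, (g x / p x) * (g y / p y)
              * (sampleProb p S * ((if x ∈ S then (1:ℝ) else 0) * (if y ∈ S then (1:ℝ) else 0))) :=
            Finset.sum_congr rfl fun S _ => by ring
        _ = (g x / p x) * (g y / p y) * (p x * p y) := by rw [← Finset.mul_sum, moment2 p hxy]
  have hvar : pvar p est = ∑ x ∈ H, (g x / p x) * (g x / p x) * (p x * (1 - p x)) := by
    simp only [pvar, pexpect]
    rw [hmean']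
    have e2 : ∀ S : Finset X, sampleProb p S * (est S - ∑ x ∈ H, g x) ^ 2
        = sampleProb p S * est S ^ 2 - 2 * (∑ x ∈ H, g x) * (sampleProb p S * est S)
          + (∑ x ∈ H, g x) ^ 2 * sampleProb p S := fun S => by ring
    rw [Finset.sum_congr rfl fun S _ => e2 S, Finset.sum_add_distrib, Finset.sum_sub_distrib,
      ← Finset.mul_sum, ← Finset.mul_sum, total_one, hsq', hmean', mul_one]
    have key : ∑ x ∈ H, ∑ y ∈ H, (g x / p x) * (g y / p y) * (if x = y then p x else p x * p y)
        = (∑ x ∈ H, g x) * (∑ x ∈ H, g x)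
          + ∑ x ∈ H, (g x / p x) * (g x / p x) * (p x * (1 - p x)) := by
      have e3 : ∀ x ∈ H, ∀ y ∈ H,
          (g x / p x) * (g y / p y) * (if x = y then p x else p x * p y)
          = (g x / p x * p x) * (g y / p y * p y)
            + (if x = y then (g x / p x) * (g x / p x) * (p x * (1 - p x)) else 0) := by
        intro x _ y _
        rcases eq_or_ne x y with rfl | hxy
        · rw [if_pos rfl, if_pos rfl]; ring
        · rw [if_neg hxy, if_neg hxy]; ring
      calc ∑ x ∈ H, ∑ y ∈ H, (g x / p x) * (g y / p y) * (if x = y then p x else p x * p y)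
          = ∑ x ∈ H, ((∑ y ∈ H, (g x / p x * p x) * (g y / p y * p y))
              + (g x / p x) * (g x / p x) * (p x * (1 - p x))) := by
            refine Finset.sum_congr rfl fun x hx => ?_
            rw [Finset.sum_congr rfl fun y hy => e3 x hx y hy, Finset.sum_add_distrib,
              Finset.sum_ite_eq H x
                (fun _ => (g x / p x) * (g x / p x) * (p x * (1 - p x))), if_pos hx]
        _ = (∑ x ∈ H, g x / p x * p x) * (∑ y ∈ H, g y / p y * p y)
            + ∑ x ∈ H, (g x / p x) * (g x / p x) * (p x * (1 - p x)) := by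
            rw [Finset.sum_add_distrib, ← Finset.sum_mul_sum]
        _ = (∑ x ∈ H, g x) * (∑ x ∈ H, g x)
            + ∑ x ∈ H, (g x / p x) * (g x / p x) * (p x * (1 - p x)) := by
            rw [Finset.sum_congr rfl fun x _ => hcp x]
    rw [key]; ring
  intro f hf
  have hb : 0 < b f := lt_of_lt_of_le (ha f hf) (hab f hf)
  have hSf : (∑ y, f y) ≤ b f * ∑ x, g x := by
    calc (∑ y, f y) ≤ ∑ y, b f * g y := Finset.sum_le_sum fun y _ => hhigh f hf y
      _ = b f * ∑ x, g x := by rw [Finset.mul_sum]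
  have hak : 0 < a f * kf f := mul_pos (ha f hf) (hk f hf)
  have hfac : (b f / a f) * (∑ x ∈ H, g x) * (∑ x, g x) / kf f
      = ∑ x ∈ H, g x * (b f * (∑ z, g z) / (a f * kf f)) := by
    rw [← Finset.sum_mul]
    have ha' : a f ≠ 0 := (ha f hf).ne'
    have hk' : kf f ≠ 0 := (hk f hf).ne'
    field_simp
  rw [hvar, hfac]
  refine Finset.sum_le_sum fun x hx => ?_
  rcases eq_or_lt_of_le (hg0 x) with h0 | hgx
  · rw [← h0]; simp
  · have hpx := hgp x hgx
    rcases eq_or_lt_of_le (hp1 x) with hp1' | hlt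
    · have hz : (g x / p x) * (g x / p x) * (p x * (1 - p x)) = 0 := by rw [hp1']; ring
      rw [hz]
      exact mul_nonneg (hg0 x) (div_nonneg (mul_nonneg hb.le hgs.le) hak.le)
    · have hs1 : (F.sup' hF fun f' => kf f' * f' x / ∑ y, f' y) < 1 := by
        by_contra hcon
        push_neg at hcon
        rw [hp x, min_eq_left hcon] at hlt
        exact lt_irrefl _ hlt
      have ht : kf f * f x / (∑ y, f y) ≤ p x := by
        rw [hp x, min_eq_right hs1.le]
        exact Finset.le_sup' (fun f' => kf f' * f' x / ∑ y, f' y) hf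
      have ht' : kf f * f x ≤ p x * ∑ y, f y := (div_le_iff₀ (hfs f hf)).mp ht
      have hpne : p x ≠ 0 := hpx.ne'
      have hid : (g x / p x) * (g x / p x) * (p x * (1 - p x))
          = g x ^ 2 * (1 - p x) / p x := by field_simp
      rw [hid, ← mul_div_assoc, div_le_div_iff₀ hpx hak]
      have A1 : g x * kf f * (a f * g x) ≤ g x * kf f * f x :=
        mul_le_mul_of_nonneg_left (hlow f hf x) (mul_nonneg hgx.le (hk f hf).le)
      have A2 : g x * (kf f * f x) ≤ g x * (p x * ∑ y, f y) :=
        mul_le_mul_of_nonneg_left ht' hgx.le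
      have A3 : (g x * p x) * (∑ y, f y) ≤ (g x * p x) * (b f * ∑ z, g z) :=
        mul_le_mul_of_nonneg_left hSf (mul_nonneg hgx.le hpx.le)
      have A4 : 0 ≤ g x ^ 2 * p x * (a f * kf f) :=
        mul_nonneg (mul_nonneg (sq_nonneg _) hpx.le) hak.le
      nlinarith [A1, A2, A3, A4]
end

section
/- Let X be a finite set of keys with weights w : X → ℝ, fix a key x, and let i = |{y ∈ X : w_y ≥ w_x}|. Then for every monotone non-decreasing function f : ℝ → ℝ≥0 with Σ_{y∈X} f(w_y) > 0, one has f(w_x)/Σ_{y∈X} f(w_y) ≤ 1/i, and this bound is attained by the threshold function thresh_{w_x} (where thresh_T(w) = 1 if w ≥ T and 0 otherwise). Hence the base multi-objective pps probability of x over the family M of all monotone non-decreasing functions, p^{(M,1)}_x = sup over monotone f with positive sum of f(w_x)/Σ_y f(w_y), equals 1/i. -/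
open Finset

/-- For a key `x` with `i = |{y : w_y ≥ w_x}|`, every monotone
non-decreasing nonnegative function of the weights has base pps probability of `x`
at most `1/i`; the bound is attained by the threshold function `thresh_{w_x}`, so
the base multi-objective pps probability of `x` over all monotone functions
equals `1/i` (attained supremum, i.e., `IsGreatest`). -/
theorem stmt10 {X : Type*} [Fintype X] (w : X → ℝ) (x : X)
    (i : ℕ) (hi : i = (Finset.univ.filter fun y => w x ≤ w y).card) :
    (∀ f : ℝ → ℝ, Monotone f → (∀ t, 0 ≤ f t) → 0 < ∑ y, f (w y) →
      f (w x) / ∑ y, f (w y) ≤ 1 / (i : ℝ)) ∧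
    (fun t => if w x ≤ t then (1 : ℝ) else 0) (w x) /
        (∑ y, (fun t => if w x ≤ t then (1 : ℝ) else 0) (w y)) = 1 / (i : ℝ) ∧
    IsGreatest {r : ℝ | ∃ f : ℝ → ℝ, Monotone f ∧ (∀ t, 0 ≤ f t) ∧
        0 < ∑ y, f (w y) ∧ r = f (w x) / ∑ y, f (w y)} (1 / (i : ℝ)) := by
  have hx : x ∈ Finset.univ.filter fun y => w x ≤ w y :=
    Finset.mem_filter.mpr ⟨Finset.mem_univ x, le_rfl⟩
  have hipos : 0 < i := hi ▸ Finset.card_pos.mpr ⟨x, hx⟩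
  have hireal : (0 : ℝ) < (i : ℝ) := by exact_mod_cast hipos
  -- Part 1: the upper bound
  have hbound : ∀ f : ℝ → ℝ, Monotone f → (∀ t, 0 ≤ f t) → 0 < ∑ y, f (w y) →
      f (w x) / ∑ y, f (w y) ≤ 1 / (i : ℝ) := by
    intro f hf hfnn hS
    rw [div_le_div_iff₀ hS hireal]
    have h1 : (i : ℝ) * f (w x) ≤ ∑ y ∈ Finset.univ.filter (fun y => w x ≤ w y), f (w y) := by
      have : ∑ _y ∈ Finset.univ.filter (fun y => w x ≤ w y), f (w x)
          ≤ ∑ y ∈ Finset.univ.filter (fun y => w x ≤ w y), f (w y) :=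
        Finset.sum_le_sum fun y hy => hf (Finset.mem_filter.mp hy).2
      simpa [Finset.sum_const, nsmul_eq_mul, hi] using this
    have h2 : ∑ y ∈ Finset.univ.filter (fun y => w x ≤ w y), f (w y) ≤ ∑ y, f (w y) :=
      Finset.sum_le_sum_of_subset_of_nonneg (Finset.filter_subset _ _)
        (fun y _ _ => hfnn (w y))
    calc f (w x) * (i : ℝ) = (i : ℝ) * f (w x) := mul_comm _ _
      _ ≤ ∑ y, f (w y) := h1.trans h2
      _ = 1 * ∑ y, f (w y) := (one_mul _).symm
  -- threshold sum
  have hsum : (∑ y, (fun t => if w x ≤ t then (1 : ℝ) else 0) (w y)) = (i : ℝ) := by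
    simp only [hi]
    rw [Finset.sum_boole]
  have hmono : Monotone (fun t => if w x ≤ t then (1 : ℝ) else 0) := by
    intro a b hab
    dsimp only
    split_ifs with h1 h2 <;> first | exact le_rfl | exact zero_le_one |
      exact absurd (h1.trans hab) h2
  have hval : ((fun t => if w x ≤ t then (1 : ℝ) else 0) (w x)) = 1 := if_pos le_rfl
  have heq : (fun t => if w x ≤ t then (1 : ℝ) else 0) (w x) /
      (∑ y, (fun t => if w x ≤ t then (1 : ℝ) else 0) (w y)) = 1 / (i : ℝ) := by
    rw [hsum, hval]
  refine ⟨hbound, heq, ⟨⟨fun t => if w x ≤ t then (1 : ℝ) else 0, hmono,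
      fun t => by dsimp only; split_ifs <;> norm_num, ?_, heq.symm⟩, ?_⟩⟩
  · rw [hsum]; exact hireal
  · rintro r ⟨f, hf, hfnn, hS, rfl⟩
    exact hbound f hf hfnn hS
end

section
/- Let X be a set of n keys with pairwise distinct weights w : X → ℝ, let (u_x)_{x∈X} be i.i.d. Uniform[0,1] random variables, and fix an integer k ≥ 1. Define the universal monotone bottom-k sample S = {x ∈ X : |{y ∈ X : w_y ≥ w_x and u_y < u_x}| < k}. Then E[|S|] = Σ_{i=1}^{n} min{1, k/i}, and if 3 ≤ k ≤ n then E[|S|] ≤ k·ln n. -/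
open Finset MeasureTheory

open scoped ENNReal

noncomputable def nu : Measure ℝ := volume.restrict (Set.Icc (0:ℝ) 1)
instance : IsProbabilityMeasure nu := ⟨by simp [nu]⟩

lemma cover_lem (m : ℕ) (t : ℝ) (h0 : 0 ≤ t) (h1 : t ≤ 1) :
    ∃ j < m + 1, (j : ℝ)/(m+1) ≤ t ∧ t ≤ ((j:ℝ)+1)/(m+1) := by
  have hm : (0:ℝ) < (m:ℝ) + 1 := by positivity
  rcases lt_or_eq_of_le h1 with h1 | h1
  · refine ⟨⌊t * ((m:ℝ)+1)⌋₊, ?_, ?_, ?_⟩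
    · have h2 : t * ((m:ℝ)+1) < (m:ℝ)+1 := by nlinarith
      have := (Nat.floor_lt (by positivity : (0:ℝ) ≤ t * ((m:ℝ)+1))).mpr (by exact_mod_cast h2)
      exact_mod_cast this
    · rw [div_le_iff₀ hm]; exact Nat.floor_le (by positivity)
    · rw [le_div_iff₀ hm]; exact (Nat.lt_floor_add_one _).le
  · exact ⟨m, lt_add_one m, by rw [h1, div_le_one hm]; simp,
      by rw [h1, le_div_iff₀ hm]; linarith⟩

lemma pi_cyl {X : Type*} [Fintype X] (f : X → Set ℝ) :
    (Measure.pi fun _ : X => nu) {ω | ∀ x, ω x ∈ f x} = ∏ x, nu (f x) := by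
  rw [show {ω : X → ℝ | ∀ x, ω x ∈ f x} = Set.pi Set.univ f by ext; simp [Set.mem_pi]]
  exact Measure.pi_pi _ _

lemma diag_null {X : Type*} [Fintype X] [DecidableEq X] (y z : X) (hyz : y ≠ z) :
    (Measure.pi fun _ : X => nu) {ω | ω y = ω z} = 0 := by
  set μ := Measure.pi fun _ : X => nu with hμ
  have hbad : μ {ω | ω y ∉ Set.Icc (0:ℝ) 1} = 0 := by
    have hset : {ω : X → ℝ | ω y ∉ Set.Icc (0:ℝ) 1}
        = {ω | ∀ x, ω x ∈ (fun x => if x = y then (Set.Icc (0:ℝ) 1)ᶜ else Set.univ) x} := by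
      ext ω
      constructor
      · intro h x
        by_cases hx : x = y
        · subst hx; simpa using h
        · simp [hx]
      · intro h; simpa using h y
    rw [hset, pi_cyl]
    apply Finset.prod_eq_zero (Finset.mem_univ y)
    simp [nu, Measure.restrict_apply measurableSet_Icc.compl]
  have hA : ∀ m : ℕ, μ ({ω | ω y = ω z} ∩ {ω | ω y ∈ Set.Icc (0:ℝ) 1}) ≤ (((m:ℝ≥0∞))+1)⁻¹ := by
    intro m
    set C : ℕ → Set (X → ℝ) := fun j =>
      {ω | ∀ x, ω x ∈ (fun x => if x = y ∨ x = z then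
        Set.Icc ((j:ℝ)/(m+1)) (((j:ℝ)+1)/(m+1)) else Set.univ) x} with hC
    have hsub : {ω : X → ℝ | ω y = ω z} ∩ {ω | ω y ∈ Set.Icc (0:ℝ) 1}
        ⊆ ⋃ j ∈ Finset.range (m+1), C j := by
      rintro ω ⟨he, h0, h1⟩
      obtain ⟨j, hj, hj1, hj2⟩ := cover_lem m (ω y) h0 h1
      refine Set.mem_biUnion (Finset.mem_range.mpr hj) ?_
      intro x
      by_cases hx : x = y ∨ x = z
      · have hval : ω x = ω y := by rcases hx with hx | hx <;> rw [hx]; exact he.symm ▸ rfl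
        simp only [hx, if_pos]
        rw [hval]
        exact ⟨hj1, hj2⟩
      · simp [hx]
    have hCj : ∀ j, μ (C j) ≤ (((m:ℝ≥0∞))+1)⁻¹ * (((m:ℝ≥0∞))+1)⁻¹ := by
      intro j
      rw [hC]
      dsimp only
      rw [pi_cyl]
      have hval : ∀ x : X, nu (if x = y ∨ x = z then
          Set.Icc ((j:ℝ)/(m+1)) (((j:ℝ)+1)/(m+1)) else Set.univ) ≤
          (if x = y ∨ x = z then (((m:ℝ≥0∞))+1)⁻¹ else 1) := by
        intro x
        by_cases hx : x = y ∨ x = z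
        · simp only [hx, if_pos]
          calc nu (Set.Icc ((j:ℝ)/(m+1)) (((j:ℝ)+1)/(m+1)))
              ≤ volume (Set.Icc ((j:ℝ)/(m+1)) (((j:ℝ)+1)/(m+1))) :=
                Measure.restrict_le_self _
            _ = ENNReal.ofReal ((((j:ℝ)+1)/(m+1)) - ((j:ℝ)/(m+1))) := Real.volume_Icc
            _ = (((m:ℝ≥0∞))+1)⁻¹ := by
                rw [show (((j:ℝ)+1)/(m+1)) - ((j:ℝ)/(m+1)) = ((m:ℝ)+1)⁻¹ by field_simp; ring]
                rw [ENNReal.ofReal_inv_of_pos (by positivity)]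
                congr 1
                rw [ENNReal.ofReal_add (by positivity) zero_le_one,
                  ENNReal.ofReal_natCast, ENNReal.ofReal_one]
        · simp [hx]
      calc ∏ x, nu (if x = y ∨ x = z then
              Set.Icc ((j:ℝ)/(m+1)) (((j:ℝ)+1)/(m+1)) else Set.univ)
          ≤ ∏ x, (if x = y ∨ x = z then (((m:ℝ≥0∞))+1)⁻¹ else 1) :=
            Finset.prod_le_prod' fun x _ => hval x
        _ = ∏ x ∈ ({y, z} : Finset X), (if x = y ∨ x = z then (((m:ℝ≥0∞))+1)⁻¹ else 1) := by
            refine (Finset.prod_subset (Finset.subset_univ _) ?_).symm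
            intro x _ hx
            simp only [Finset.mem_insert, Finset.mem_singleton] at hx
            simp [hx]
        _ = (((m:ℝ≥0∞))+1)⁻¹ * (((m:ℝ≥0∞))+1)⁻¹ := by
            rw [Finset.prod_pair hyz]
            simp
    calc μ ({ω | ω y = ω z} ∩ {ω | ω y ∈ Set.Icc (0:ℝ) 1})
        ≤ μ (⋃ j ∈ Finset.range (m+1), C j) := measure_mono hsub
      _ ≤ ∑ j ∈ Finset.range (m+1), μ (C j) := measure_biUnion_finset_le _ _
      _ ≤ ∑ _j ∈ Finset.range (m+1), (((m:ℝ≥0∞))+1)⁻¹ * (((m:ℝ≥0∞))+1)⁻¹ :=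
          Finset.sum_le_sum fun j _ => hCj j
      _ = (((m:ℝ≥0∞))+1)⁻¹ := by
          rw [Finset.sum_const, Finset.card_range, nsmul_eq_mul, ← mul_assoc]
          push_cast
          rw [ENNReal.mul_inv_cancel (by simp) (by finiteness), one_mul]
  have hle : ∀ m : ℕ, μ {ω | ω y = ω z} ≤ (((m:ℝ≥0∞))+1)⁻¹ := by
    intro m
    have : {ω : X → ℝ | ω y = ω z} ⊆
        ({ω | ω y = ω z} ∩ {ω | ω y ∈ Set.Icc (0:ℝ) 1}) ∪ {ω | ω y ∉ Set.Icc (0:ℝ) 1} := by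
      intro ω hω
      by_cases h : ω y ∈ Set.Icc (0:ℝ) 1
      · exact Or.inl ⟨hω, h⟩
      · exact Or.inr h
    calc μ {ω | ω y = ω z} ≤ _ := measure_mono this
      _ ≤ μ ({ω | ω y = ω z} ∩ {ω | ω y ∈ Set.Icc (0:ℝ) 1}) + μ {ω | ω y ∉ Set.Icc (0:ℝ) 1} :=
          measure_union_le _ _
      _ ≤ (((m:ℝ≥0∞))+1)⁻¹ := by rw [hbad, add_zero]; exact hA m
  by_contra h0
  obtain ⟨n, hn⟩ := ENNReal.exists_inv_nat_lt h0
  have : μ {ω | ω y = ω z} ≤ ((n:ℝ≥0∞))⁻¹ := by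
    refine le_trans (hle n) ?_
    gcongr
    exact le_self_add
  exact absurd hn (not_lt.mpr this)

lemma rank_bij {X : Type*} [DecidableEq X] (B : Finset X) (f : X → ℝ)
    (hf : Set.InjOn f B) (r : ℕ) (hr : r < B.card) :
    ∃! y, y ∈ B ∧ (B.filter fun z => f z < f y).card = r := by
  set g : X → ℕ := fun y => (B.filter fun z => f z < f y).card with hg
  have hmono : ∀ y ∈ B, ∀ y' ∈ B, f y < f y' → g y < g y' := by
    intro y hy y' hy' hlt
    apply Finset.card_lt_card
    constructor
    · intro z hz
      simp only [Finset.mem_filter] at hz ⊢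
      exact ⟨hz.1, hz.2.trans hlt⟩
    · intro hsub
      have : y ∈ B.filter fun z => f z < f y := hsub (by simp [hy, hlt])
      simp at this
  have hinj : ∀ y ∈ B, ∀ y' ∈ B, g y = g y' → y = y' := by
    intro y hy y' hy' hgy
    rcases lt_trichotomy (f y) (f y') with h | h | h
    · exact absurd hgy (hmono y hy y' hy' h).ne
    · exact hf hy hy' h
    · exact absurd hgy.symm (hmono y' hy' y hy h).ne
  have hlt : ∀ y ∈ B, g y < B.card := by
    intro y hy
    have h1 : (B.filter fun z => f z < f y) ⊆ B.erase y := by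
      intro z hz
      simp only [Finset.mem_filter] at hz
      exact Finset.mem_erase.mpr ⟨fun h => absurd hz.2 (by simp [h]), hz.1⟩
    exact lt_of_le_of_lt (Finset.card_le_card h1) (Finset.card_erase_lt_of_mem hy)
  have himg : B.image g = Finset.range B.card := by
    apply Finset.eq_of_subset_of_card_le
    · intro n hn
      obtain ⟨y, hy, rfl⟩ := Finset.mem_image.mp hn
      exact Finset.mem_range.mpr (hlt y hy)
    · rw [Finset.card_range, Finset.card_image_of_injOn]
      intro y hy y' hy' h
      exact hinj y hy y' hy' h
  have hr' : r ∈ B.image g := himg ▸ Finset.mem_range.mpr hr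
  obtain ⟨y, hy, hgy⟩ := Finset.mem_image.mp hr'
  exact ⟨y, ⟨hy, hgy⟩, fun y' ⟨hy', hgy'⟩ => hinj y' hy' y hy (hgy'.trans hgy.symm)⟩

section Rank
variable {X : Type*} [Fintype X] [DecidableEq X]

lemma cnt_measurable (B : Finset X) (y : X) :
    Measurable fun ω : X → ℝ => (B.filter fun z => ω z < ω y).card := by
  simp only [Finset.card_filter]
  exact Finset.measurable_sum _ fun z _ => Measurable.ite
    (measurableSet_lt (measurable_pi_apply z) (measurable_pi_apply y)) measurable_const
    measurable_const

lemma swap_mp (σ : Equiv.Perm X) :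
    MeasurePreserving (fun ω : X → ℝ => ω ∘ σ)
      (Measure.pi fun _ => nu) (Measure.pi fun _ => nu) := by
  have h := measurePreserving_piCongrLeft (fun _ : X => nu) σ.symm
  convert h using 1
  funext ω
  funext x
  show ω (σ x) = MeasurableEquiv.piCongrLeft (fun _ => ℝ) σ.symm ω x
  have h2 := Equiv.piCongrLeft_apply_apply (fun _ : X => ℝ) σ.symm ω (σ x)
  simp only [Equiv.symm_apply_apply] at h2 ⊢
  rw [show (MeasurableEquiv.piCongrLeft (fun _ : X => ℝ) σ.symm ω x)
      = Equiv.piCongrLeft (fun _ : X => ℝ) σ.symm ω x from rfl]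
  rw [show x = σ.symm (σ x) by simp] at h2 ⊢
  simpa using h2.symm

lemma rank_eq (B : Finset X) (x : X) (hx : x ∈ B) (r : ℕ) (hr : r < B.card) :
    (Measure.pi fun _ : X => nu) {ω | (B.filter fun z => ω z < ω x).card = r}
      = (B.card : ℝ≥0∞)⁻¹ := by
  set μ := Measure.pi fun _ : X => nu with hμ
  set E : X → Set (X → ℝ) := fun y => {ω | (B.filter fun z => ω z < ω y).card = r} with hE
  have hEmeas : ∀ y, MeasurableSet (E y) :=
    fun y => (cnt_measurable B y) (measurableSet_singleton r)
  -- swap symmetry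
  have heq : ∀ y ∈ B, μ (E y) = μ (E x) := by
    intro y hy
    set σ := Equiv.swap x y with hσ
    have hBσ : ∀ z ∈ B, σ z ∈ B := by
      intro z hz
      rcases eq_or_ne z x with rfl | hzx
      · simpa [hσ] using hy
      rcases eq_or_ne z y with rfl | hzy
      · simpa [hσ] using hx
      · simpa [hσ, Equiv.swap_apply_of_ne_of_ne hzx hzy] using hz
    have hpre : (fun ω : X → ℝ => ω ∘ σ) ⁻¹' (E x) = E y := by
      ext ω
      simp only [hE, Set.mem_preimage, Set.mem_setOf_eq, Function.comp, hσ,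
        Equiv.swap_apply_left]
      have hcard : (B.filter fun z => ω (Equiv.swap x y z) < ω y).card
          = (B.filter fun z => ω z < ω y).card := by
        refine Finset.card_bij' (fun z _ => Equiv.swap x y z) (fun z _ => Equiv.swap x y z)
          ?_ ?_ ?_ ?_
        · intro a ha; simp only [Finset.mem_filter] at ha ⊢
          exact ⟨hσ ▸ hBσ a ha.1, ha.2⟩
        · intro a ha; simp only [Finset.mem_filter] at ha ⊢
          refine ⟨hσ ▸ hBσ a ha.1, ?_⟩
          rw [show Equiv.swap x y (Equiv.swap x y a) = a by simp]
          exact ha.2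
        · intro a _; simp
        · intro a _; simp
      rw [hcard]
    calc μ (E y) = μ ((fun ω : X → ℝ => ω ∘ σ) ⁻¹' (E x)) := by rw [hpre]
      _ = μ (E x) := (swap_mp σ).measure_preimage (hEmeas x).nullMeasurableSet
  -- a.e. exactly one y in B has rank r
  have hDnull : μ {ω : X → ℝ | ¬ Set.InjOn ω B} = 0 := by
    refine measure_mono_null (t := ⋃ p : X × X, {ω : X → ℝ | p.1 ≠ p.2 ∧ ω p.1 = ω p.2}) ?_ ?_
    · intro ω hω
      simp only [Set.mem_setOf_eq, Set.InjOn] at hω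
      push_neg at hω
      obtain ⟨a, ha, b, hb, hab, hne⟩ := hω
      exact Set.mem_iUnion.mpr ⟨(a, b), hne, hab⟩
    · apply measure_iUnion_null
      rintro ⟨a, b⟩
      rcases eq_or_ne a b with rfl | hab
      · simp
      · exact measure_mono_null (fun ω hω => hω.2) (diag_null a b hab)
  have hsum : ∑ y ∈ B, μ (E y) = 1 := by
    have h1 : ∑ y ∈ B, μ (E y) = ∫⁻ ω, ∑ y ∈ B, (E y).indicator (fun _ => (1:ℝ≥0∞)) ω ∂μ := by
      rw [lintegral_finset_sum _ (fun y _ => (measurable_const.indicator (hEmeas y)))]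
      refine Finset.sum_congr rfl fun y _ => ?_
      rw [lintegral_indicator (hEmeas y)]
      simp
    rw [h1]
    have h2 : ∀ᵐ ω ∂μ, ∑ y ∈ B, (E y).indicator (fun _ => (1:ℝ≥0∞)) ω = 1 := by
      rw [MeasureTheory.ae_iff]
      refine measure_mono_null (t := {ω : X → ℝ | ¬ Set.InjOn ω B}) ?_ hDnull
      · intro ω hω
        simp only [Set.mem_setOf_eq] at hω ⊢
        intro hinj
        apply hω
        obtain ⟨y₀, ⟨hy₀B, hy₀⟩, huniq⟩ := rank_bij B ω hinj r hr
        have : ∀ y ∈ B, (E y).indicator (fun _ => (1:ℝ≥0∞)) ω = if y = y₀ then 1 else 0 := by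
          intro y hy
          rcases eq_or_ne y y₀ with rfl | hne
          · simp [Set.indicator_apply, hE, hy₀]
          · simp only [hne, if_neg, Set.indicator_apply, hE, Set.mem_setOf_eq]
            rw [if_neg (fun hcnt => hne (huniq y ⟨hy, hcnt⟩))]
            simp
        rw [Finset.sum_congr rfl this, Finset.sum_ite_eq' B y₀ (fun _ => (1:ℝ≥0∞))]
        simp [hy₀B]
    rw [lintegral_congr_ae h2]
    simp [hμ]
  have hcard0 : (B.card : ℝ≥0∞) ≠ 0 := by
    simp only [ne_eq, Nat.cast_eq_zero, Finset.card_eq_zero]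
    exact fun h => by simp [h] at hx
  have hsum' : (B.card : ℝ≥0∞) * μ (E x) = 1 := by
    rw [← hsum, Finset.sum_congr rfl heq, Finset.sum_const, nsmul_eq_mul]
  calc μ (E x) = (B.card : ℝ≥0∞)⁻¹ * ((B.card : ℝ≥0∞) * μ (E x)) := by
        rw [← mul_assoc, ENNReal.inv_mul_cancel hcard0 (by finiteness), one_mul]
    _ = (B.card : ℝ≥0∞)⁻¹ := by rw [hsum', mul_one]

end Rank

section KeyProb
variable {X : Type*} [Fintype X] [DecidableEq X]

lemma cnt_lt (B : Finset X) (x : X) (hx : x ∈ B) (ω : X → ℝ) :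
    (B.filter fun z => ω z < ω x).card < B.card := by
  refine lt_of_le_of_lt (Finset.card_le_card ?_) (Finset.card_erase_lt_of_mem hx)
  intro z hz
  simp only [Finset.mem_filter] at hz
  exact Finset.mem_erase.mpr ⟨fun h => absurd hz.2 (by simp [h]), hz.1⟩

lemma key_prob (B : Finset X) (x : X) (hx : x ∈ B) (k : ℕ) :
    (Measure.pi fun _ : X => nu) {ω | (B.filter fun z => ω z < ω x).card < k}
      = (min k B.card : ℕ) * (B.card : ℝ≥0∞)⁻¹ := by
  set μ := Measure.pi fun _ : X => nu with hμ
  set E : ℕ → Set (X → ℝ) := fun r => {ω | (B.filter fun z => ω z < ω x).card = r} with hE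
  have hF : {ω : X → ℝ | (B.filter fun z => ω z < ω x).card < k}
      = ⋃ r ∈ Finset.range (min k B.card), E r := by
    ext ω
    simp only [Set.mem_setOf_eq, Set.mem_iUnion, hE, Finset.mem_range, exists_prop]
    constructor
    · intro h
      exact ⟨_, lt_min h (cnt_lt B x hx ω), rfl⟩
    · rintro ⟨r, hr, rfl⟩
      exact lt_of_lt_of_le hr (min_le_left _ _)
  rw [hF, measure_biUnion_finset ?_ (fun r _ => show MeasurableSet (E r) from (cnt_measurable B x) (measurableSet_singleton r))]
  · rw [Finset.sum_congr rfl fun r hr => rank_eq B x hx r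
      (lt_of_lt_of_le (Finset.mem_range.mp hr) (min_le_right _ _))]
    rw [Finset.sum_const, Finset.card_range, nsmul_eq_mul]
  · intro r _ r' _ hne
    simp only [Function.onFun, hE]
    rw [Set.disjoint_left]
    intro ω h1 h2
    exact hne (h1.symm.trans h2)

end KeyProb

lemma min_div_real (k i : ℕ) (hi : 1 ≤ i) :
    ((min k i : ℕ) : ℝ) / (i : ℝ) = min 1 ((k : ℝ) / i) := by
  have hi' : (0:ℝ) < i := by exact_mod_cast hi
  rcases le_total k i with h | h
  · rw [min_eq_left h, min_eq_right (by rw [div_le_one hi']; exact_mod_cast h)]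
  · rw [min_eq_right h, min_eq_left (by rw [le_div_iff₀ hi']; rw [one_mul]; exact_mod_cast h)]
    exact div_self hi'.ne'

lemma harmonic_le (a : ℕ) (ha : 1 ≤ a) : ∀ n : ℕ, a ≤ n →
    ∑ i ∈ Finset.Ioc a n, (1:ℝ)/i ≤ Real.log n - Real.log a := by
  refine Nat.le_induction ?_ ?_
  · simp
  · intro n hn ih
    rw [← Finset.Icc_add_one_left_eq_Ioc] at ih ⊢
    rw [Finset.sum_Icc_succ_top (by omega : a + 1 ≤ n + 1)]
    have hn0 : (0:ℝ) < n := by exact_mod_cast lt_of_lt_of_le ha hn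
    have hlog : (1:ℝ)/(n+1) ≤ Real.log (n+1) - Real.log n := by
      have h1 : Real.log ((n:ℝ)/(n+1)) ≤ (n:ℝ)/(n+1) - 1 :=
        Real.log_le_sub_one_of_pos (by positivity)
      rw [Real.log_div hn0.ne' (by positivity)] at h1
      have : (n:ℝ)/(n+1) - 1 = -(1/(n+1)) := by field_simp; ring
      rw [this] at h1
      linarith
    push_cast at hlog ⊢
    linarith


/-- The universal monotone bottom-`k` sample over `n` keys with
distinct weights and i.i.d. Uniform[0,1] values `u_x = ω x` has expected size
exactly `Σ_{i=1}^n min{1, k/i}`, which is at most `k·ln n` when `3 ≤ k ≤ n`. -/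
theorem stmt11 {X : Type*} [Fintype X] [DecidableEq X]
    (w : X → ℝ) (hw : Function.Injective w) (k : ℕ) (hk : 1 ≤ k)
    (μ : Measure (X → ℝ))
    (hμ : μ = Measure.pi fun _ : X => volume.restrict (Set.Icc (0 : ℝ) 1))
    (S : (X → ℝ) → Finset X)
    (hS : ∀ ω, S ω = Finset.univ.filter fun x =>
      (Finset.univ.filter fun y => w x ≤ w y ∧ ω y < ω x).card < k) :
    (∫ ω, ((S ω).card : ℝ) ∂μ) =
      ∑ i ∈ Finset.Icc 1 (Fintype.card X), min 1 ((k : ℝ) / (i : ℝ)) ∧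
    (3 ≤ k → k ≤ Fintype.card X →
      (∫ ω, ((S ω).card : ℝ) ∂μ) ≤ (k : ℝ) * Real.log (Fintype.card X)) := by
  classical
  set n := Fintype.card X with hn
  have hμ' : μ = Measure.pi fun _ : X => nu := hμ
  haveI : IsProbabilityMeasure μ := hμ' ▸ inferInstance
  set B : X → Finset X := fun x => Finset.univ.filter fun y => w x ≤ w y with hB
  have hxB : ∀ x, x ∈ B x := fun x => by simp [hB]
  have hcard1 : ∀ x, 1 ≤ (B x).card := fun x => Finset.card_pos.mpr ⟨x, hxB x⟩
  set F : X → Set (X → ℝ) := fun x =>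
    {ω | ((B x).filter fun z => ω z < ω x).card < k} with hFdef
  have hFmeas : ∀ x, MeasurableSet (F x) := fun x =>
    (cnt_measurable (B x) x) (by trivial : MeasurableSet (Set.Iio k))
  -- step 1: integral equals sum of probabilities (as min expressions)
  have hprob : ∀ x, (μ (F x)).toReal = min 1 ((k:ℝ) / ((B x).card : ℝ)) := by
    intro x
    rw [hμ', hFdef]
    rw [key_prob (B x) x (hxB x) k]
    rw [ENNReal.toReal_mul, ENNReal.toReal_inv]
    simp only [ENNReal.toReal_natCast]
    rw [← div_eq_mul_inv]
    exact min_div_real k (B x).card (hcard1 x)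
  have hint : (∫ ω, ((S ω).card : ℝ) ∂μ) = ∑ x : X, min 1 ((k:ℝ) / ((B x).card : ℝ)) := by
    have hcardfun : ∀ ω, ((S ω).card : ℝ)
        = ∑ x : X, (F x).indicator (fun _ => (1:ℝ)) ω := by
      intro ω
      rw [hS ω, Finset.card_filter]
      push_cast
      refine Finset.sum_congr rfl fun x _ => ?_
      rw [Set.indicator_apply]
      refine if_congr ?_ rfl rfl
      simp only [hFdef, Set.mem_setOf_eq, hB, Finset.filter_filter]
    calc (∫ ω, ((S ω).card : ℝ) ∂μ)
        = ∫ ω, ∑ x : X, (F x).indicator (fun _ => (1:ℝ)) ω ∂μ := by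
          simp only [hcardfun]
      _ = ∑ x : X, ∫ ω, (F x).indicator (fun _ => (1:ℝ)) ω ∂μ :=
          integral_finset_sum _ fun x _ => (integrable_const (1:ℝ)).indicator (hFmeas x)
      _ = ∑ x : X, (μ (F x)).toReal := by
          refine Finset.sum_congr rfl fun x _ => ?_
          rw [integral_indicator_const (1:ℝ) (hFmeas x), smul_eq_mul, mul_one]; rfl
      _ = ∑ x : X, min 1 ((k:ℝ) / ((B x).card : ℝ)) :=
          Finset.sum_congr rfl fun x _ => hprob x
  -- step 2: reindex by rank
  set g : X → ℕ := fun x => (B x).card with hg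
  have hkey : ∀ x y, w x ≤ w y → g x = g y → x = y := by
    intro x y hxy h
    have hsub : B y ⊆ B x := by
      intro z hz
      simp only [hB, Finset.mem_filter] at hz ⊢
      exact ⟨Finset.mem_univ z, hxy.trans hz.2⟩
    have heq : B y = B x := Finset.eq_of_subset_of_card_le hsub (le_of_eq h)
    have : x ∈ B y := heq ▸ hxB x
    simp only [hB, Finset.mem_filter] at this
    exact hw (le_antisymm hxy this.2)
  have hginj : Set.InjOn g (Finset.univ : Finset X) := by
    intro x _ y _ h
    rcases le_total (w x) (w y) with hle | hle
    · exact hkey x y hle h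
    · exact (hkey y x hle h.symm).symm
  have himg : Finset.univ.image g = Finset.Icc 1 n := by
    apply Finset.eq_of_subset_of_card_le
    · intro i hi
      obtain ⟨x, _, rfl⟩ := Finset.mem_image.mp hi
      refine Finset.mem_Icc.mpr ⟨hcard1 x, ?_⟩
      calc g x ≤ (Finset.univ : Finset X).card := Finset.card_le_card (Finset.subset_univ _)
        _ = n := by rw [hn]; rfl
    · rw [Nat.card_Icc, Finset.card_image_of_injOn hginj]
      simp [hn]
  have hsum_eq : (∫ ω, ((S ω).card : ℝ) ∂μ)
      = ∑ i ∈ Finset.Icc 1 n, min 1 ((k : ℝ) / (i : ℝ)) := by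
    rw [hint, ← himg, Finset.sum_image (fun x hx y hy h => hginj hx hy h)]
  refine ⟨hsum_eq, fun hk3 hkn => ?_⟩
  rw [hsum_eq]
  -- analytic bound
  have hsplit : Finset.Icc 1 n = Finset.Icc 1 k ∪ Finset.Ioc k n := by
    ext i
    simp only [Finset.mem_Icc, Finset.mem_Ioc, Finset.mem_union]
    omega
  have hdisj : Disjoint (Finset.Icc 1 k) (Finset.Ioc k n) := by
    rw [Finset.disjoint_left]
    intro i hi hi'
    simp only [Finset.mem_Icc, Finset.mem_Ioc] at hi hi'
    omega
  rw [hsplit, Finset.sum_union hdisj]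
  have hS1 : ∑ i ∈ Finset.Icc 1 k, min 1 ((k : ℝ) / (i : ℝ)) = k := by
    have hterm : ∀ i ∈ Finset.Icc 1 k, min 1 ((k : ℝ) / (i : ℝ)) = 1 := by
      intro i hi
      simp only [Finset.mem_Icc] at hi
      have hi0 : (0:ℝ) < i := by exact_mod_cast hi.1
      rw [min_eq_left (by rw [le_div_iff₀ hi0, one_mul]; exact_mod_cast hi.2)]
    rw [Finset.sum_congr rfl hterm, Finset.sum_const, Nat.card_Icc]
    simp
  have hS2 : ∑ i ∈ Finset.Ioc k n, min 1 ((k : ℝ) / (i : ℝ))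
      ≤ (k:ℝ) * (Real.log n - Real.log k) := by
    calc ∑ i ∈ Finset.Ioc k n, min 1 ((k : ℝ) / (i : ℝ))
        = ∑ i ∈ Finset.Ioc k n, (k:ℝ) * (1 / (i : ℝ)) := by
          refine Finset.sum_congr rfl fun i hi => ?_
          simp only [Finset.mem_Ioc] at hi
          have hi0 : (0:ℝ) < i := by
            have : 0 < i := by omega
            exact_mod_cast this
          rw [min_eq_right (by rw [div_le_one hi0]; exact_mod_cast hi.1.le), mul_one_div]
      _ = (k:ℝ) * ∑ i ∈ Finset.Ioc k n, (1 / (i : ℝ)) := by rw [Finset.mul_sum]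
      _ ≤ (k:ℝ) * (Real.log n - Real.log k) := by
          refine mul_le_mul_of_nonneg_left ?_ (by positivity)
          exact harmonic_le k (by omega) n hkn
  have hlogk : 1 ≤ Real.log k := by
    rw [Real.le_log_iff_exp_le (by positivity : (0:ℝ) < (k:ℝ))]
    have h3 : (3:ℝ) ≤ (k:ℝ) := by exact_mod_cast hk3
    have := Real.exp_one_lt_d9
    linarith
  have hk0 : (0:ℝ) ≤ (k:ℝ) := by positivity
  rw [hS1]
  calc (k:ℝ) + ∑ i ∈ Finset.Ioc k n, min 1 ((k : ℝ) / (i : ℝ))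
      ≤ (k:ℝ) + (k:ℝ) * (Real.log n - Real.log k) := by linarith [hS2]
    _ ≤ (k:ℝ) * Real.log n := by nlinarith
end

section
/- Consider n keys with pairwise distinct weights, indexed i = 1, …, n in decreasing weight order, and a sampling scheme that includes key i in the sample with probability p_i. Suppose that for every i there is a nonnegative random variable Ŷ_i (an estimator of sum(thresh_{w_i}; {i}) = 1) with E[Ŷ_i] = 1, with Ŷ_i = 0 whenever key i is not sampled, and with Var[Ŷ_i] ≤ i/k (i.e., CV at most 1/sqrt(q·k) where q = q^{(thresh_{w_i})}({i}) = 1/i). Then p_i ≥ k/(k+i) for every i, and hence the expected sample size satisfies Σ_{i=1}^{n} p_i ≥ k·Σ_{i=1}^{n} 1/(k+i) ≥ k·(H_n − H_k) for n ≥ k, where H_m = Σ_{j=1}^{m} 1/j; in particular the expected sample size is Ω(k·ln(n/k)). -/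
open Finset MeasureTheory ProbabilityTheory

/-- Lower bound on the sample size of any scheme meeting the
per-segment quality guarantee for all threshold functions: if for each key `i`
(keys indexed `1,…,n` in decreasing weight order) there is a nonnegative unbiased
estimator `Y_i` of `sum(thresh_{w_i};{i}) = 1` that vanishes when `i` is not
sampled and has variance at most `i/k`, then `p_i ≥ k/(k+i)` for every `i`, so the
expected sample size is at least `k·Σ_{i=1}^n 1/(k+i) ≥ k·(H_n − H_k)` (for
`n ≥ k`), which is `Ω(k·ln(n/k))`. -/
theorem stmt14 {Ω : Type*} [MeasurableSpace Ω] (μ : Measure Ω)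
    [IsProbabilityMeasure μ]
    (n k : ℕ) (hk : 1 ≤ k)
    (w : ℕ → ℝ) (hw : ∀ i j, 1 ≤ i → i < j → j ≤ n → w j < w i)
    (p : ℕ → ℝ) (hp0 : ∀ i ∈ Finset.Icc 1 n, 0 < p i)
    (A : ℕ → Set Ω) (hA : ∀ i ∈ Finset.Icc 1 n, MeasurableSet (A i))
    (hpA : ∀ i ∈ Finset.Icc 1 n, μ (A i) = ENNReal.ofReal (p i))
    (Y : ℕ → Ω → ℝ) (hYint : ∀ i ∈ Finset.Icc 1 n, MemLp (Y i) 2 μ)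
    (hpos : ∀ i ∈ Finset.Icc 1 n, ∀ ω, 0 ≤ Y i ω)
    (hmean : ∀ i ∈ Finset.Icc 1 n, ∫ ω, Y i ω ∂μ = 1)
    (hzero : ∀ i ∈ Finset.Icc 1 n, ∀ ω ∉ A i, Y i ω = 0)
    (hvar : ∀ i ∈ Finset.Icc 1 n, variance (Y i) μ ≤ (i : ℝ) / (k : ℝ)) :
    (∀ i ∈ Finset.Icc 1 n, (k : ℝ) / ((k : ℝ) + (i : ℝ)) ≤ p i) ∧
    (k : ℝ) * ∑ i ∈ Finset.Icc 1 n, 1 / ((k : ℝ) + (i : ℝ)) ≤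
      ∑ i ∈ Finset.Icc 1 n, p i ∧
    (k ≤ n →
      (k : ℝ) * ((∑ j ∈ Finset.Icc 1 n, 1 / (j : ℝ)) -
          ∑ j ∈ Finset.Icc 1 k, 1 / (j : ℝ)) ≤
        (k : ℝ) * ∑ i ∈ Finset.Icc 1 n, 1 / ((k : ℝ) + (i : ℝ))) := by
  have hk0 : (0 : ℝ) < (k : ℝ) := by exact_mod_cast hk
  -- main per-key bound
  have hmain : ∀ i ∈ Finset.Icc 1 n, (k : ℝ) / ((k : ℝ) + (i : ℝ)) ≤ p i := by
    intro i hi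
    have hi1 : 1 ≤ i := (Finset.mem_Icc.mp hi).1
    have hki : (0 : ℝ) < (k : ℝ) + (i : ℝ) := by positivity
    -- Cauchy–Schwarz: 1 = ∫ Y ≤ (∫ Y²)^{1/2} (p i)^{1/2}
    have hconj : (2 : ℝ).HolderConjugate 2 := by
      rw [Real.holderConjugate_iff]; norm_num
    have hmemg : MemLp ((A i).indicator fun _ => (1 : ℝ)) (ENNReal.ofReal 2) μ :=
      memLp_indicator_const _ (hA i hi) 1 (Or.inr (measure_ne_top μ _))
    have hmemf : MemLp (Y i) (ENNReal.ofReal 2) μ := by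
      have := hYint i hi
      simpa [ENNReal.ofReal_ofNat] using this
    have hCS := integral_mul_le_Lp_mul_Lq_of_nonneg hconj
      (Filter.Eventually.of_forall (hpos i hi))
      (Filter.Eventually.of_forall (fun ω => by
        by_cases h : ω ∈ A i <;> simp [Set.indicator, h]))
      hmemf hmemg
    have heqfg : ∫ ω, Y i ω * (A i).indicator (fun _ => (1:ℝ)) ω ∂μ = 1 := by
      have hfe : (fun ω => Y i ω * (A i).indicator (fun _ => (1:ℝ)) ω) = Y i := by
        funext ω
        by_cases h : ω ∈ A i
        · simp [Set.indicator, h]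
        · simp [Set.indicator, h, hzero i hi ω h]
      rw [hfe, hmean i hi]
    have heqg : ∫ ω, (A i).indicator (fun _ => (1:ℝ)) ω ^ (2:ℝ) ∂μ = p i := by
      have : (fun ω => (A i).indicator (fun _ => (1:ℝ)) ω ^ (2:ℝ)) =
          (A i).indicator (fun _ => (1:ℝ)) := by
        funext ω; by_cases h : ω ∈ A i <;> simp [Set.indicator, h]
      rw [this, integral_indicator_const _ (hA i hi), Measure.real_def, hpA i hi,
        ENNReal.toReal_ofReal (hp0 i hi).le, smul_eq_mul, mul_one]
    have heqf : ∫ ω, Y i ω ^ (2:ℝ) ∂μ = ∫ ω, Y i ω ^ 2 ∂μ := by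
      refine integral_congr_ae (Filter.Eventually.of_forall fun ω => ?_)
      simp [Real.rpow_two]
    -- second moment bound
    have hY2 : ∫ ω, Y i ω ^ 2 ∂μ ≤ ((k : ℝ) + (i : ℝ)) / (k : ℝ) := by
      have hvd := variance_eq_sub (hYint i hi) (μ := μ)
      have : variance (Y i) μ = (∫ ω, Y i ω ^ 2 ∂μ) - 1 := by
        rw [hvd]; simp [hmean i hi]
      have hv := hvar i hi
      rw [this] at hv
      have : (∫ ω, Y i ω ^ 2 ∂μ) ≤ (i : ℝ) / (k : ℝ) + 1 := by linarith
      calc (∫ ω, Y i ω ^ 2 ∂μ) ≤ (i : ℝ) / (k : ℝ) + 1 := this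
        _ = ((k : ℝ) + (i : ℝ)) / (k : ℝ) := by field_simp; ring
    have hY2nn : (0 : ℝ) ≤ ∫ ω, Y i ω ^ 2 ∂μ :=
      integral_nonneg fun ω => sq_nonneg _
    -- From Cauchy–Schwarz: 1 ≤ (∫ Y²) * p i
    have hone : (1 : ℝ) ≤ (∫ ω, Y i ω ^ 2 ∂μ) * p i := by
      rw [heqfg, heqg, heqf] at hCS
      have hsq := mul_le_mul hCS hCS (by norm_num)
        (mul_nonneg (Real.rpow_nonneg hY2nn _) (Real.rpow_nonneg (hp0 i hi).le _))
      calc (1 : ℝ) = 1 * 1 := by ring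
        _ ≤ ((∫ ω, Y i ω ^ 2 ∂μ) ^ ((1:ℝ)/2) * p i ^ ((1:ℝ)/2)) *
            ((∫ ω, Y i ω ^ 2 ∂μ) ^ ((1:ℝ)/2) * p i ^ ((1:ℝ)/2)) := hsq
        _ = ((∫ ω, Y i ω ^ 2 ∂μ) ^ ((1:ℝ)/2) * (∫ ω, Y i ω ^ 2 ∂μ) ^ ((1:ℝ)/2)) *
            (p i ^ ((1:ℝ)/2) * p i ^ ((1:ℝ)/2)) := by ring
        _ = (∫ ω, Y i ω ^ 2 ∂μ) * p i := by
            rw [← Real.rpow_add' hY2nn (by norm_num),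
              ← Real.rpow_add' (hp0 i hi).le (by norm_num)]
            norm_num
    have h2 : (1 : ℝ) ≤ ((k : ℝ) + (i : ℝ)) / (k : ℝ) * p i :=
      le_trans hone (mul_le_mul_of_nonneg_right hY2 (hp0 i hi).le)
    rw [div_le_iff₀ hki]
    have := mul_le_mul_of_nonneg_right h2 hk0.le
    calc (k : ℝ) = 1 * k := by ring
      _ ≤ (((k : ℝ) + (i : ℝ)) / (k : ℝ) * p i) * k := this
      _ = p i * ((k : ℝ) + (i : ℝ)) := by field_simp
  refine ⟨hmain, ?_, ?_⟩
  · rw [Finset.mul_sum]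
    refine Finset.sum_le_sum fun i hi => ?_
    rw [mul_one_div]
    exact hmain i hi
  · intro hkn
    refine mul_le_mul_of_nonneg_left ?_ hk0.le
    have hsplit : Finset.Icc 1 n = Finset.Icc 1 k ∪ Finset.Ioc k n := by
      ext a; simp only [Finset.mem_Icc, Finset.mem_Ioc, Finset.mem_union]; omega
    have hdisj : Disjoint (Finset.Icc 1 k) (Finset.Ioc k n) := by
      rw [Finset.disjoint_left]
      intro a ha hb
      exact absurd (Finset.mem_Ioc.mp hb).1 (not_lt.mpr (Finset.mem_Icc.mp ha).2)
    have hs : ∑ j ∈ Finset.Icc 1 k, 1 / (j:ℝ) + ∑ j ∈ Finset.Ioc k n, 1 / (j:ℝ) =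
        ∑ j ∈ Finset.Icc 1 n, 1 / (j:ℝ) := by
      rw [← Finset.sum_union hdisj]; congr 1; exact hsplit.symm
    have heq : ∑ j ∈ Finset.Ioc k n, 1 / (j : ℝ) =
        ∑ i ∈ Finset.Icc 1 (n - k), 1 / ((k : ℝ) + (i : ℝ)) := by
      refine Finset.sum_nbij' (fun j => j - k) (fun i => i + k) ?_ ?_ ?_ ?_ ?_
      · intro j hj
        simp only [Finset.mem_Ioc, Finset.mem_Icc] at hj ⊢; omega
      · intro i hi
        simp only [Finset.mem_Ioc, Finset.mem_Icc] at hi ⊢; omega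
      · intro j hj
        simp only [Finset.mem_Ioc] at hj
        show j - k + k = j; omega
      · intro i hi
        show i + k - k = i; omega
      · intro j hj
        simp only [Finset.mem_Ioc] at hj
        congr 1
        have h1 : (k : ℝ) + ((j - k : ℕ) : ℝ) = (j : ℝ) := by
          have h2 : ((j - k : ℕ) : ℝ) = (j : ℝ) - (k : ℝ) := by
            rw [Nat.cast_sub hj.1.le]
          rw [h2]; ring
        rw [h1]
    have hsub : ∑ i ∈ Finset.Icc 1 (n - k), 1 / ((k : ℝ) + (i : ℝ)) ≤
        ∑ i ∈ Finset.Icc 1 n, 1 / ((k : ℝ) + (i : ℝ)) := by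
      refine Finset.sum_le_sum_of_subset_of_nonneg ?_ ?_
      · exact Finset.Icc_subset_Icc_right (by omega)
      · intro i _ _; positivity
    linarith [heq ▸ hsub, hs]
end

section
/- Let X be a finite set of keys with weights w : X → ℝ>0 and ranks r : X → ℝ>0, and assume there are no seed ties: for all distinct keys y, z and all T > 0, r_y/min(T, w_y) ≠ r_z/min(T, w_z). Fix an integer k ≥ 1. Then for every key x: there exists T > 0 with |{y ≠ x : r_y/min(T, w_y) < r_x/min(T, w_x)}| < k if and only if |{y ≠ x : r_y/min(w_x, w_y) < r_x/w_x}| < k. That is, x belongs to the union over all T > 0 of the bottom-k samples for the capping functions Capp_T if and only if x belongs to the bottom-k sample for Capp_{w_x}. -/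
open Finset

/-- With no seed ties, a key `x` belongs to the union over
`T > 0` of the bottom-`k` samples for the capping functions `Capp_T` if and only
if it belongs to the bottom-`k` sample for `Capp_{w_x}`. -/
theorem stmt16 {X : Type*} [Fintype X] [DecidableEq X]
    (w r : X → ℝ) (hw : ∀ x, 0 < w x) (hr : ∀ x, 0 < r x)
    (hties : ∀ y z : X, y ≠ z → ∀ T : ℝ, 0 < T →
      r y / min T (w y) ≠ r z / min T (w z))
    (k : ℕ) (hk : 1 ≤ k) :
    ∀ x : X,
      (∃ T : ℝ, 0 < T ∧ (Finset.univ.filter fun y =>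
          y ≠ x ∧ r y / min T (w y) < r x / min T (w x)).card < k) ↔
      (Finset.univ.filter fun y =>
          y ≠ x ∧ r y / min (w x) (w y) < r x / w x).card < k := by
  intro x
  constructor
  · rintro ⟨T, hT, hc⟩
    refine lt_of_le_of_lt (Finset.card_le_card ?_) hc
    intro y hy
    simp only [Finset.mem_filter, Finset.mem_univ, true_and] at hy ⊢
    obtain ⟨hyx, hlt⟩ := hy
    refine ⟨hyx, ?_⟩
    have hwx := hw x; have hwy := hw y; have hrx := hr x; have hry := hr y
    have hmxy : 0 < min (w x) (w y) := lt_min hwx hwy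
    rcases le_total (w x) T with hle | hle
    · rw [min_eq_right hle]
      calc r y / min T (w y) ≤ r y / min (w x) (w y) := by
            gcongr
        _ < r x / w x := hlt
    · rw [min_eq_left hle]
      rcases le_total T (w y) with h2 | h2
      · rw [min_eq_left h2]
        have h5 : r y / w x ≤ r y / min (w x) (w y) := by
          gcongr
          exact min_le_left _ _
        have hry_lt : r y < r x :=
          (div_lt_div_iff_of_pos_right hwx).mp (lt_of_le_of_lt h5 hlt)
        exact (div_lt_div_iff_of_pos_right hT).mpr hry_lt
      · rw [min_eq_right h2]
        rw [min_eq_right (le_trans h2 hle)] at hlt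
        calc r y / w y < r x / w x := hlt
          _ ≤ r x / T := by gcongr
  · intro h
    exact ⟨w x, hw x, by simpa [min_self] using h⟩
end

section
/- Let X be a finite set of keys with weights w : X → ℝ>0 and ranks r : X → ℝ>0, with no seed ties (for all distinct keys y, z and all T > 0, r_y/min(T,w_y) ≠ r_z/min(T,w_z)). For a key x define h_x = |{y ≠ x : w_y ≥ w_x and r_y < r_x}| and ℓ_x = |{y ≠ x : w_y < w_x and r_y/w_y < r_x/w_x}|. Then {y ≠ x : r_y/min(w_x, w_y) < r_x/w_x} is the disjoint union of the two sets counted by h_x and ℓ_x, and consequently x belongs to the universal capping sample S^{(C,k)} if and only if ℓ_x + h_x < k. -/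
open Finset

/-- The keys with smaller `Capp_{w_x}`-seed than `x` split
disjointly into those counted by `h_x` (heavier keys with smaller rank) and those
counted by `ℓ_x` (lighter keys with smaller weight-normalized rank); consequently,
with no seed ties, `x` belongs to the universal capping sample `S^(C,k)` (the union
over `T > 0` of the bottom-`k` samples for `Capp_T`) iff `ℓ_x + h_x < k`. -/
theorem stmt17 {X : Type*} [Fintype X] [DecidableEq X]
    (w r : X → ℝ) (hw : ∀ x, 0 < w x) (hr : ∀ x, 0 < r x)
    (hties : ∀ y z : X, y ≠ z → ∀ T : ℝ, 0 < T →
      r y / min T (w y) ≠ r z / min T (w z))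
    (k : ℕ) (hk : 1 ≤ k) (x : X)
    (hx lx : ℕ)
    (hhx : hx = (Finset.univ.filter fun y =>
      y ≠ x ∧ w x ≤ w y ∧ r y < r x).card)
    (hlx : lx = (Finset.univ.filter fun y =>
      y ≠ x ∧ w y < w x ∧ r y / w y < r x / w x).card) :
    (Finset.univ.filter fun y => y ≠ x ∧ r y / min (w x) (w y) < r x / w x) =
      (Finset.univ.filter fun y => y ≠ x ∧ w x ≤ w y ∧ r y < r x) ∪
        (Finset.univ.filter fun y => y ≠ x ∧ w y < w x ∧ r y / w y < r x / w x) ∧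
    Disjoint
      (Finset.univ.filter fun y => y ≠ x ∧ w x ≤ w y ∧ r y < r x)
      (Finset.univ.filter fun y => y ≠ x ∧ w y < w x ∧ r y / w y < r x / w x) ∧
    ((∃ T : ℝ, 0 < T ∧ (Finset.univ.filter fun y =>
        y ≠ x ∧ r y / min T (w y) < r x / min T (w x)).card < k) ↔
      lx + hx < k) := by
  have hset : (Finset.univ.filter fun y => y ≠ x ∧ r y / min (w x) (w y) < r x / w x) =
      (Finset.univ.filter fun y => y ≠ x ∧ w x ≤ w y ∧ r y < r x) ∪
        (Finset.univ.filter fun y => y ≠ x ∧ w y < w x ∧ r y / w y < r x / w x) := by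
    ext y
    simp only [mem_filter, mem_union, mem_univ, true_and]
    rcases le_or_gt (w x) (w y) with h | h
    · rw [min_eq_left h, div_lt_div_iff_of_pos_right (hw x)]
      constructor
      · rintro ⟨hy, hlt⟩; exact Or.inl ⟨hy, h, hlt⟩
      · rintro (⟨hy, _, hlt⟩ | ⟨hy, hlt, _⟩)
        · exact ⟨hy, hlt⟩
        · exact absurd h (not_le.2 hlt)
    · rw [min_eq_right h.le]
      constructor
      · rintro ⟨hy, hlt⟩; exact Or.inr ⟨hy, h, hlt⟩
      · rintro (⟨hy, hle, _⟩ | ⟨hy, _, hlt⟩)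
        · exact absurd h (not_lt.2 hle)
        · exact ⟨hy, hlt⟩
  have hdisj : Disjoint
      (Finset.univ.filter fun y => y ≠ x ∧ w x ≤ w y ∧ r y < r x)
      (Finset.univ.filter fun y => y ≠ x ∧ w y < w x ∧ r y / w y < r x / w x) := by
    rw [Finset.disjoint_left]
    intro y h1 h2
    simp only [mem_filter, mem_univ, true_and] at h1 h2
    exact absurd h1.2.1 (not_le.2 h2.2.1)
  refine ⟨hset, hdisj, ?_⟩
  -- key monotonicity
  have key : ∀ T : ℝ, 0 < T → ∀ y : X,
      r y / min (w x) (w y) < r x / w x →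
      r y / min T (w y) < r x / min T (w x) := by
    intro T hT y hlt
    have hm : 0 < min (w x) (w y) := lt_min (hw x) (hw y)
    rcases le_or_gt (w x) T with hTx | hTx
    · rw [min_eq_right hTx]
      have h1 : min (w x) (w y) ≤ min T (w y) := min_le_min hTx le_rfl
      have h2 : r y / min T (w y) ≤ r y / min (w x) (w y) := by
        gcongr
        exact (hr y).le
      exact lt_of_le_of_lt h2 hlt
    · rw [min_eq_left hTx.le]
      have hrlt : r y < r x := by
        have h3 := (div_lt_div_iff₀ hm (hw x)).mp hlt
        have h4 : min (w x) (w y) ≤ w x := min_le_left _ _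
        nlinarith [hr x, hw x, hm]
      rcases le_or_gt T (w y) with hTy | hTy
      · rw [min_eq_left hTy]
        exact div_lt_div_of_pos_right hrlt hT
      · rw [min_eq_right hTy.le]
        have hyx : w y < w x := lt_trans hTy hTx
        have h5 : r y / w y < r x / w x := by
          rwa [min_eq_right hyx.le] at hlt
        have h6 : r x / w x < r x / T := div_lt_div_of_pos_left (hr x) hT hTx
        exact lt_trans h5 h6
  constructor
  · rintro ⟨T, hT, hcard⟩
    have hsub : (Finset.univ.filter fun y => y ≠ x ∧ r y / min (w x) (w y) < r x / w x) ⊆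
        (Finset.univ.filter fun y => y ≠ x ∧ r y / min T (w y) < r x / min T (w x)) := by
      intro y hy
      simp only [mem_filter, mem_univ, true_and] at hy ⊢
      exact ⟨hy.1, key T hT y hy.2⟩
    have := Finset.card_le_card hsub
    have hcards : lx + hx =
        (Finset.univ.filter fun y => y ≠ x ∧ r y / min (w x) (w y) < r x / w x).card := by
      rw [hset, Finset.card_union_of_disjoint hdisj, hhx, hlx, add_comm]
    omega
  · intro hlxhx
    refine ⟨w x, hw x, ?_⟩
    have hself : min (w x) (w x) = w x := min_self _
    have heq : (Finset.univ.filter fun y =>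
        y ≠ x ∧ r y / min (w x) (w y) < r x / min (w x) (w x)) =
        (Finset.univ.filter fun y => y ≠ x ∧ r y / min (w x) (w y) < r x / w x) := by
      simp [hself]
    rw [heq, hset, Finset.card_union_of_disjoint hdisj, ← hhx, ← hlx]
    omega
end
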